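/- arXiv:1911.10308 — 4 statements merged into one kernel-verified Lean document; each statement's English description precedes it below -/
import Mathlib

section
/- There exists an absolute constant C > 0 such that the following holds. Let p be an odd prime, G a subgroup of the multiplicative group 𝔽_p*, and g, h : G → 𝔽_p* arbitrary functions. Define f(x,y) = g(x)(h(x)+y) on G × 𝔽_p* and set m = μ(g·h), where (g·h)(x) := g(x)h(x). Then for all nonempty finite subsets A ⊆ G and B, C ⊆ 𝔽_p*, one has |f(A,B)| · |B·C| ≥ C · min{ |A||B|²|C| / (p m²) , p|B| / m }. -/
open Finset Pointwise

/-- `muOn G g` is `max_{t ∈ 𝔽_p*} |{x ∈ G : g x = t}|`. -/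
def muOn {p : ℕ} [NeZero p] (G : Finset (ZMod p)) (g : ZMod p → ZMod p) : ℕ :=
  Finset.sup (Finset.univ.filter fun t : ZMod p => t ≠ 0)
    (fun t => (G.filter fun x => g x = t).card)

namespace HHaux

variable {p : ℕ} [Fact p.Prime]

lemma norm_char_eq_one (χ : MulChar (ZMod p) ℂ) {z : ZMod p} (hz : z ≠ 0) : ‖χ z‖ = 1 := by
  have hp1 : p - 1 ≠ 0 := by
    have := (Fact.out : p.Prime).two_le; omega
  have h : χ z ^ (p - 1) = 1 := by
    rw [← map_pow, ZMod.pow_card_sub_one_eq_one hz, map_one]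
  have h2 : ‖χ z‖ ^ (p - 1) = 1 := by rw [← norm_pow, h, norm_one]
  rcases lt_trichotomy ‖χ z‖ 1 with hlt | heq | hgt
  · exact absurd h2 (by have := pow_lt_one₀ (norm_nonneg _) hlt hp1; linarith)
  · exact heq
  · exact absurd h2 (by have := one_lt_pow₀ hgt hp1; linarith)

lemma norm_char_le_one (χ : MulChar (ZMod p) ℂ) (z : ZMod p) : ‖χ z‖ ≤ 1 := by
  by_cases hz : z = 0
  · subst hz
    rw [MulChar.map_nonunit χ not_isUnit_zero]
    simp
  · exact le_of_eq (norm_char_eq_one χ hz)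

lemma conj_char (χ : MulChar (ZMod p) ℂ) (z : ZMod p) :
    (starRingEnd ℂ) (χ z) = χ z⁻¹ := by
  by_cases hz : z = 0
  · subst hz
    rw [MulChar.map_nonunit χ not_isUnit_zero, inv_zero,
      MulChar.map_nonunit χ not_isUnit_zero, map_zero]
  · have h1 : χ z * χ z⁻¹ = 1 := by rw [← map_mul, mul_inv_cancel₀ hz, map_one]
    have h2 := Complex.inv_eq_conj (norm_char_eq_one χ hz)
    rw [← h2]
    exact inv_eq_of_mul_eq_one_right h1

lemma sum_chars (z : ZMod p) :
    ∑ χ : DirichletCharacter ℂ p, χ z = if z = 1 then ((p - 1 : ℕ) : ℂ) else 0 := by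
  haveI : NeZero (Monoid.exponent (ZMod p)ˣ) := ⟨Monoid.exponent_ne_zero_of_finite⟩
  rw [DirichletCharacter.sum_characters_eq ℂ z, Nat.totient_prime Fact.out]

lemma offdiag_sum {χ : MulChar (ZMod p) ℂ} (hχ : χ ≠ 1) {d d' : ZMod p} (hdd : d ≠ d') :
    ∑ x : ZMod p, χ ((d - x) * (d' - x)⁻¹) = -1 := by
  have hstep : ∑ x : ZMod p, χ ((d - x) * (d' - x)⁻¹)
      = ∑ u ∈ (univ : Finset (ZMod p)).erase 1, χ u := by
    rw [← Finset.add_sum_erase _ _ (Finset.mem_univ d')]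
    have h0 : χ ((d - d') * (d' - d')⁻¹) = 0 := by
      rw [sub_self, inv_zero, mul_zero, MulChar.map_nonunit χ not_isUnit_zero]
    rw [h0, zero_add]
    refine Finset.sum_nbij' (fun x => (d - x) * (d' - x)⁻¹)
      (fun u => (d - u * d') * (1 - u)⁻¹) ?_ ?_ ?_ ?_ ?_
    · intro x hx
      rcases Finset.mem_erase.mp hx with ⟨hx', -⟩
      refine Finset.mem_erase.mpr ⟨?_, Finset.mem_univ _⟩
      intro h
      have hdx : d' - x ≠ 0 := sub_ne_zero.mpr (Ne.symm hx')
      have := (mul_inv_eq_one₀ hdx).mp h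
      exact hdd (sub_left_inj.mp this)
    · intro u hu
      rcases Finset.mem_erase.mp hu with ⟨hu', -⟩
      refine Finset.mem_erase.mpr ⟨?_, Finset.mem_univ _⟩
      intro h
      have h1u : (1 : ZMod p) - u ≠ 0 := sub_ne_zero.mpr (Ne.symm hu')
      rw [mul_inv_eq_iff_eq_mul₀ h1u] at h
      exact hdd (by linear_combination h)
    · intro x hx
      rcases Finset.mem_erase.mp hx with ⟨hx', -⟩
      have hdx : d' - x ≠ 0 := sub_ne_zero.mpr (Ne.symm hx')
      have hdd' : d' - d ≠ 0 := sub_ne_zero.mpr (Ne.symm hdd)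
      show (d - ((d - x) * (d' - x)⁻¹) * d') * (1 - (d - x) * (d' - x)⁻¹)⁻¹ = x
      have key : 1 - (d - x) * (d' - x)⁻¹ = (d' - d) * (d' - x)⁻¹ := by
        field_simp
        ring
      rw [key]
      field_simp
      ring
    · intro u hu
      rcases Finset.mem_erase.mp hu with ⟨hu', -⟩
      have h1u : (1 : ZMod p) - u ≠ 0 := sub_ne_zero.mpr (Ne.symm hu')
      have hdd' : d' - d ≠ 0 := sub_ne_zero.mpr (Ne.symm hdd)
      show (d - ((d - u * d') * (1 - u)⁻¹)) * (d' - ((d - u * d') * (1 - u)⁻¹))⁻¹ = u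
      have key : d' - (d - u * d') * (1 - u)⁻¹ = (d' - d) * (1 - u)⁻¹ := by
        field_simp
        ring
      have key2 : d - (d - u * d') * (1 - u)⁻¹ = u * ((d' - d) * (1 - u)⁻¹) := by
        field_simp
        ring
      rw [key, key2, mul_inv_cancel_right₀ (mul_ne_zero hdd' (inv_ne_zero h1u))]
    · intro x hx
      rfl
  rw [hstep, Finset.sum_erase_eq_sub (Finset.mem_univ 1),
    MulChar.sum_eq_zero_of_ne_one hχ, map_one, zero_sub]

lemma diag_sum (χ : MulChar (ZMod p) ℂ) (d : ZMod p) :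
    ∑ x : ZMod p, χ ((d - x) * (d - x)⁻¹) = ((p - 1 : ℕ) : ℂ) := by
  have h : ∀ x : ZMod p, χ ((d - x) * (d - x)⁻¹) = if x = d then 0 else 1 := by
    intro x
    by_cases hx : x = d
    · simp [hx, MulChar.map_nonunit χ not_isUnit_zero]
    · have hdx : d - x ≠ 0 := sub_ne_zero.mpr (Ne.symm hx)
      rw [mul_inv_cancel₀ hdx, map_one, if_neg hx]
  rw [Finset.sum_congr rfl fun x _ => h x]
  rw [Finset.sum_ite, Finset.sum_const_zero, zero_add, Finset.sum_const]
  have : (univ.filter fun x : ZMod p => ¬ x = d).card = p - 1 := by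
    rw [Finset.filter_not]
    rw [Finset.card_sdiff_of_subset (by intro x hx; exact Finset.mem_univ x)]
    simp [Finset.filter_eq', ZMod.card]
  rw [this]
  simp
lemma U_bound {χ : MulChar (ZMod p) ℂ} (hχ : χ ≠ 1) (D : Finset (ZMod p)) :
    ∑ x : ZMod p, ‖∑ d ∈ D, χ (d - x)‖ ^ 2 ≤ (p : ℝ) * D.card := by
  set U : ZMod p → ℂ := fun x => ∑ d ∈ D, χ (d - x) with hU
  have key : ∑ x : ZMod p, (U x * (starRingEnd ℂ) (U x))
      = ∑ d ∈ D, ∑ d' ∈ D, ∑ x : ZMod p, χ ((d - x) * (d' - x)⁻¹) := by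
    have h1 : ∀ x : ZMod p, U x * (starRingEnd ℂ) (U x)
        = ∑ d ∈ D, ∑ d' ∈ D, χ ((d - x) * (d' - x)⁻¹) := by
      intro x
      rw [hU]
      simp only [map_sum]
      rw [Finset.sum_mul_sum]
      refine Finset.sum_congr rfl fun d _ => Finset.sum_congr rfl fun d' _ => ?_
      rw [conj_char, ← map_mul]
    rw [Finset.sum_congr rfl fun x _ => h1 x]
    rw [Finset.sum_comm]
    exact Finset.sum_congr rfl fun d _ => Finset.sum_comm
  have key2 : ∑ x : ZMod p, (U x * (starRingEnd ℂ) (U x))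
      = (D.card : ℂ) * (((p - 1 : ℕ) : ℂ) - ((D.card : ℂ) - 1)) := by
    rw [key]
    have h2 : ∀ d ∈ D, ∑ d' ∈ D, ∑ x : ZMod p, χ ((d - x) * (d' - x)⁻¹)
        = ((p - 1 : ℕ) : ℂ) - ((D.card : ℂ) - 1) := by
      intro d hd
      rw [← Finset.add_sum_erase _ _ hd, diag_sum]
      have h3 : ∀ d' ∈ D.erase d, ∑ x : ZMod p, χ ((d - x) * (d' - x)⁻¹) = -1 := by
        intro d' hd'
        exact offdiag_sum hχ (Ne.symm (Finset.mem_erase.mp hd').1)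
      rw [Finset.sum_congr rfl h3, Finset.sum_const, Finset.card_erase_of_mem hd]
      have hD1 : (1 : ℕ) ≤ D.card := Finset.card_pos.mpr ⟨d, hd⟩
      rw [nsmul_eq_mul, Nat.cast_sub hD1]
      push_cast
      ring
    rw [Finset.sum_congr rfl h2, Finset.sum_const]
    simp [mul_comm]
  have key3 : ∑ x : ZMod p, ‖U x‖ ^ 2
      = (D.card : ℝ) * (((p - 1 : ℕ) : ℝ) - ((D.card : ℝ) - 1)) := by
    have := key2
    have hc : ((∑ x : ZMod p, ‖U x‖ ^ 2 : ℝ) : ℂ)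
        = (((D.card : ℝ) * (((p - 1 : ℕ) : ℝ) - ((D.card : ℝ) - 1)) : ℝ) : ℂ) := by
      push_cast
      rw [← key2]
      refine Finset.sum_congr rfl fun x _ => ?_
      rw [Complex.mul_conj]
      norm_cast
      rw [Complex.normSq_eq_norm_sq]
    exact_mod_cast hc
  rw [key3]
  have hD0 : (0:ℝ) ≤ (D.card : ℝ) := by positivity
  have hp : ((p - 1 : ℕ) : ℝ) ≤ (p : ℝ) := by
    exact_mod_cast Nat.cast_le.mpr (Nat.sub_le p 1)
  have h1 : (0:ℝ) ≤ (D.card : ℝ) - 1 ∨ (D.card : ℝ) = 0 := by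
    rcases Nat.eq_zero_or_pos D.card with h | h
    · right; exact_mod_cast h
    · left; have : (1:ℝ) ≤ (D.card : ℝ) := by exact_mod_cast h
      linarith
  rcases h1 with h | h
  · nlinarith
  · rw [h]; ring_nf; positivity

lemma fiber_bound (A : Finset (ZMod p)) (xf : ZMod p → ZMod p) (m : ℕ)
    (hm : ∀ t : ZMod p, (A.filter fun a => xf a = t).card ≤ m)
    (w : ZMod p → ℝ) (hw : ∀ t, 0 ≤ w t) :
    ∑ a ∈ A, w (xf a) ≤ (m : ℝ) * ∑ t : ZMod p, w t := by
  rw [← Finset.sum_fiberwise A xf (fun a => w (xf a)), Finset.mul_sum]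
  refine Finset.sum_le_sum fun j _ => ?_
  have h1 : ∑ i ∈ A.filter fun a => xf a = j, w (xf i)
      = ((A.filter fun a => xf a = j).card : ℝ) * w j := by
    rw [Finset.sum_congr rfl fun i hi => by rw [(Finset.mem_filter.mp hi).2],
      Finset.sum_const, nsmul_eq_mul]
  rw [h1]
  exact mul_le_mul_of_nonneg_right (by exact_mod_cast hm j) (hw j)

lemma S_orth (S : Finset (ZMod p)) (ψ : ZMod p → ZMod p)
    (hinj : ∀ s ∈ S, ∀ s' ∈ S, ψ s = ψ s' → s = s') (h0 : ∀ s ∈ S, ψ s ≠ 0) :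
    ∑ χ : DirichletCharacter ℂ p, ‖∑ s ∈ S, χ (ψ s)‖ ^ 2 = ((p - 1 : ℕ) : ℝ) * S.card := by
  have key : ∑ χ : DirichletCharacter ℂ p,
      ((∑ s ∈ S, χ (ψ s)) * (starRingEnd ℂ) (∑ s ∈ S, χ (ψ s)))
      = ((p - 1 : ℕ) : ℂ) * S.card := by
    have h1 : ∀ χ : DirichletCharacter ℂ p,
        (∑ s ∈ S, χ (ψ s)) * (starRingEnd ℂ) (∑ s ∈ S, χ (ψ s))
        = ∑ s ∈ S, ∑ s' ∈ S, χ (ψ s * (ψ s')⁻¹) := by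
      intro χ
      simp only [map_sum]
      rw [Finset.sum_mul_sum]
      refine Finset.sum_congr rfl fun s _ => Finset.sum_congr rfl fun s' _ => ?_
      rw [conj_char, ← map_mul]
    have h2 : ∀ s ∈ S, ∑ s' ∈ S,
        (∑ χ : DirichletCharacter ℂ p, χ (ψ s * (ψ s')⁻¹)) = ((p - 1 : ℕ) : ℂ) := by
      intro s hs
      have h3 : ∀ s' ∈ S, (∑ χ : DirichletCharacter ℂ p, χ (ψ s * (ψ s')⁻¹))
          = if s' = s then ((p - 1 : ℕ) : ℂ) else 0 := by
        intro s' hs'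
        rw [sum_chars]
        by_cases h : s' = s
        · rw [if_pos h, h, mul_inv_cancel₀ (h0 s hs), if_pos rfl]
        · rw [if_neg h, if_neg]
          intro hone
          exact h ((hinj s hs s' hs' ((mul_inv_eq_one₀ (h0 s' hs')).mp hone)).symm)
      rw [Finset.sum_congr rfl h3, Finset.sum_ite_eq' S s, if_pos hs]
    rw [Finset.sum_congr rfl fun χ _ => h1 χ]
    calc ∑ χ : DirichletCharacter ℂ p, ∑ s ∈ S, ∑ s' ∈ S, χ (ψ s * (ψ s')⁻¹)
        = ∑ s ∈ S, ∑ χ : DirichletCharacter ℂ p, ∑ s' ∈ S, χ (ψ s * (ψ s')⁻¹) :=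
          Finset.sum_comm
      _ = ∑ s ∈ S, ∑ s' ∈ S, ∑ χ : DirichletCharacter ℂ p, χ (ψ s * (ψ s')⁻¹) :=
          Finset.sum_congr rfl fun s _ => Finset.sum_comm
      _ = ∑ s ∈ S, ((p - 1 : ℕ) : ℂ) := Finset.sum_congr rfl h2
      _ = ((p - 1 : ℕ) : ℂ) * S.card := by
          rw [Finset.sum_const, nsmul_eq_mul, mul_comm]
  have hc : ((∑ χ : DirichletCharacter ℂ p, ‖∑ s ∈ S, χ (ψ s)‖ ^ 2 : ℝ) : ℂ)
      = ((((p - 1 : ℕ) : ℝ) * (S.card : ℝ) : ℝ) : ℂ) := by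
    push_cast
    rw [← key]
    refine Finset.sum_congr rfl fun χ _ => ?_
    rw [Complex.mul_conj]
    norm_cast
    rw [Complex.normSq_eq_norm_sq]
  exact_mod_cast hc

lemma T_bound {χ : MulChar (ZMod p) ℂ} (hχ : χ ≠ 1) (A D : Finset (ZMod p))
    (xf yf : ZMod p → ZMod p) (m : ℕ)
    (hm : ∀ t : ZMod p, (A.filter fun a => xf a = t).card ≤ m) :
    ‖∑ a ∈ A, ∑ d ∈ D, χ ((d - xf a) * (yf a)⁻¹)‖ ^ 2
      ≤ (A.card : ℝ) * ((m : ℝ) * ((p : ℝ) * D.card)) := by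
  have h1 : ‖∑ a ∈ A, ∑ d ∈ D, χ ((d - xf a) * (yf a)⁻¹)‖
      ≤ ∑ a ∈ A, ‖∑ d ∈ D, χ (d - xf a)‖ := by
    refine le_trans (norm_sum_le _ _) (Finset.sum_le_sum fun a _ => ?_)
    have h2 : ∑ d ∈ D, χ ((d - xf a) * (yf a)⁻¹)
        = (∑ d ∈ D, χ (d - xf a)) * χ ((yf a)⁻¹) := by
      rw [Finset.sum_mul]
      exact Finset.sum_congr rfl fun d _ => by rw [← map_mul]
    rw [h2, norm_mul]
    exact mul_le_of_le_one_right (norm_nonneg _) (norm_char_le_one χ _)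
  have h3 : (∑ a ∈ A, ‖∑ d ∈ D, χ (d - xf a)‖) ^ 2
      ≤ (A.card : ℝ) * ∑ a ∈ A, ‖∑ d ∈ D, χ (d - xf a)‖ ^ 2 := by
    have := Finset.sum_mul_sq_le_sq_mul_sq A (fun _ => (1:ℝ))
      (fun a => ‖∑ d ∈ D, χ (d - xf a)‖)
    simpa using this
  have h4 : ∑ a ∈ A, ‖∑ d ∈ D, χ (d - xf a)‖ ^ 2
      ≤ (m : ℝ) * ∑ x : ZMod p, ‖∑ d ∈ D, χ (d - x)‖ ^ 2 :=
    fiber_bound A xf m hm (fun t => ‖∑ d ∈ D, χ (d - t)‖ ^ 2) (fun t => by positivity)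
  have h5 := U_bound hχ D
  calc ‖∑ a ∈ A, ∑ d ∈ D, χ ((d - xf a) * (yf a)⁻¹)‖ ^ 2
      ≤ (∑ a ∈ A, ‖∑ d ∈ D, χ (d - xf a)‖) ^ 2 := by
        exact pow_le_pow_left₀ (norm_nonneg _) h1 2
    _ ≤ (A.card : ℝ) * ∑ a ∈ A, ‖∑ d ∈ D, χ (d - xf a)‖ ^ 2 := h3
    _ ≤ (A.card : ℝ) * ((m : ℝ) * ((p : ℝ) * D.card)) := by
        refine mul_le_mul_of_nonneg_left ?_ (by positivity)
        refine le_trans h4 ?_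
        exact mul_le_mul_of_nonneg_left h5 (by positivity)

end HHaux

set_option maxHeartbeats 2000000 in
theorem hegyvari_hennecart_product :
    ∃ C > (0:ℝ),
      ∀ (p : ℕ) [Fact p.Prime], p ≠ 2 →
      ∀ G : Finset (ZMod p),
      (0:ZMod p) ∉ G → (1:ZMod p) ∈ G →
      (∀ x ∈ G, ∀ y ∈ G, x * y ∈ G) → (∀ x ∈ G, x⁻¹ ∈ G) →
      ∀ g h : ZMod p → ZMod p,
      (∀ x ∈ G, g x ≠ 0) → (∀ x ∈ G, h x ≠ 0) →
      ∀ A B Cs : Finset (ZMod p),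
      A ⊆ G → A.Nonempty → B.Nonempty → Cs.Nonempty →
      (0:ZMod p) ∉ B → (0:ZMod p) ∉ Cs →
      C * min ((A.card : ℝ) * (B.card : ℝ) ^ 2 * (Cs.card : ℝ) /
                ((p : ℝ) * ((muOn G (fun x => g x * h x) : ℕ) : ℝ) ^ 2))
              ((p : ℝ) * (B.card : ℝ) / ((muOn G (fun x => g x * h x) : ℕ) : ℝ)) ≤
        ((Finset.image₂ (fun x y => g x * (h x + y)) A B).card : ℝ) * ((B * Cs).card : ℝ) := by
  refine ⟨1/4, by norm_num, ?_⟩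
  intro p hp hp2 G hG0 hG1 hGmul hGinv g h hg hh A B Cs hAG hA hB hC hB0 hC0
  classical
  set m := muOn G (fun x => g x * h x) with hmdef
  set Dst := Finset.image₂ (fun x y => g x * (h x + y)) A B with hDdef
  set E := B * Cs with hEdef
  -- basic nonvanishing facts
  have hgA : ∀ a ∈ A, g a ≠ 0 := fun a ha => hg a (hAG ha)
  have hhA : ∀ a ∈ A, h a ≠ 0 := fun a ha => hh a (hAG ha)
  have hBne0 : ∀ b ∈ B, b ≠ 0 := fun b hb h0 => hB0 (h0 ▸ hb)
  have hCne0 : ∀ c ∈ Cs, c ≠ 0 := fun c hc h0 => hC0 (h0 ▸ hc)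
  have hE0 : ∀ e ∈ E, e ≠ 0 := by
    intro e he
    rw [hEdef] at he
    rcases Finset.mem_mul.mp he with ⟨b, hb, c, hc, rfl⟩
    exact mul_ne_zero (hBne0 b hb) (hCne0 c hc)
  have hmfib : ∀ t : ZMod p, (A.filter fun a => g a * h a = t).card ≤ m := by
    intro t
    rcases (A.filter fun a => g a * h a = t).eq_empty_or_nonempty with hemp | ⟨a, ha⟩
    · rw [hemp]; simp
    · rcases Finset.mem_filter.mp ha with ⟨haA, hat⟩
      have ht0 : t ≠ 0 := by
        rw [← hat]; exact mul_ne_zero (hgA a haA) (hhA a haA)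
      calc (A.filter fun a => g a * h a = t).card
          ≤ (G.filter fun a => g a * h a = t).card :=
            Finset.card_le_card (Finset.filter_subset_filter _ hAG)
        _ ≤ m := by
            rw [hmdef]
            exact Finset.le_sup (f := fun t => (G.filter fun x => g x * h x = t).card)
              (Finset.mem_filter.mpr ⟨Finset.mem_univ t, ht0⟩)
  have hm1 : 1 ≤ m := by
    obtain ⟨a, ha⟩ := hA
    have h1 : 1 ≤ (G.filter fun x => g x * h x = g a * h a).card :=
      Finset.card_pos.mpr ⟨a, Finset.mem_filter.mpr ⟨hAG ha, rfl⟩⟩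
    refine le_trans h1 ?_
    rw [hmdef]
    exact Finset.le_sup (f := fun t => (G.filter fun x => g x * h x = t).card)
      (Finset.mem_filter.mpr ⟨Finset.mem_univ _, mul_ne_zero (hgA a ha) (hhA a ha)⟩)
  -- the counting set
  set base : Finset ((ZMod p × ZMod p) × (ZMod p × ZMod p)) := (Cs ×ˢ E) ×ˢ (A ×ˢ Dst)
    with hbase
  set zf : (ZMod p × ZMod p) × (ZMod p × ZMod p) → ZMod p :=
    fun q => (q.1.1 * q.1.2⁻¹) * ((q.2.2 - g q.2.1 * h q.2.1) * (g q.2.1)⁻¹) with hzf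
  set Q := base.filter (fun q => zf q = 1) with hQdef
  -- Step 1: injection of A × B × Cs into Q
  have hQcard : A.card * B.card * Cs.card ≤ Q.card := by
    have hinj := Finset.card_le_card_of_injOn
      (f := fun t : ZMod p × ZMod p × ZMod p =>
        ((t.2.2, t.2.1 * t.2.2), (t.1, g t.1 * (h t.1 + t.2.1))))
      (s := A ×ˢ B ×ˢ Cs) (t := Q) ?_ ?_
    · calc A.card * B.card * Cs.card = (A ×ˢ B ×ˢ Cs).card := by
            rw [Finset.card_product, Finset.card_product, mul_assoc]
        _ ≤ Q.card := hinj
    · rintro ⟨a, b, c⟩ ht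
      rcases Finset.mem_product.mp ht with ⟨ha, hbc⟩
      rcases Finset.mem_product.mp hbc with ⟨hb, hc⟩
      simp only at ha hb hc
      refine Finset.mem_filter.mpr ⟨Finset.mem_product.mpr
        ⟨Finset.mem_product.mpr ⟨hc, ?_⟩, Finset.mem_product.mpr
          ⟨ha, Finset.mem_image₂_of_mem ha hb⟩⟩, ?_⟩
      · rw [hEdef]; exact Finset.mul_mem_mul hb hc
      · show (c * (b * c)⁻¹) * ((g a * (h a + b) - g a * h a) * (g a)⁻¹) = 1
        have hb' := hBne0 b hb
        have hc' := hCne0 c hc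
        have hg' := hgA a ha
        have e1 : g a * (h a + b) - g a * h a = g a * b := by ring
        rw [e1]
        field_simp
    · rintro ⟨a, b, c⟩ ht ⟨a', b', c'⟩ ht' heq
      rcases Finset.mem_product.mp ht with ⟨-, hbc⟩
      rcases Finset.mem_product.mp hbc with ⟨-, hc⟩
      simp only at hc
      simp only [Prod.mk.injEq] at heq
      obtain ⟨⟨hcc, hbcc⟩, haa, -⟩ := heq
      have hb' : b = b' := by
        have hc' := hCne0 c hc
        subst hcc
        exact mul_right_cancel₀ hc' hbcc
      simp [haa, hb', hcc]
  -- Step 2: character sum identity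
  set SC : DirichletCharacter ℂ p → ℂ := fun χ => ∑ c ∈ Cs, χ c with hSC
  set SE : DirichletCharacter ℂ p → ℂ := fun χ => ∑ e ∈ E, χ e⁻¹ with hSE
  set TT : DirichletCharacter ℂ p → ℂ :=
    fun χ => ∑ a ∈ A, ∑ d ∈ Dst, χ ((d - g a * h a) * (g a)⁻¹) with hTT
  have hId : ∑ χ : DirichletCharacter ℂ p, SC χ * SE χ * TT χ
      = ((p - 1 : ℕ) : ℂ) * (Q.card : ℂ) := by
    have h1 : ∀ χ : DirichletCharacter ℂ p, ∑ q ∈ base, χ (zf q) = SC χ * SE χ * TT χ := by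
      intro χ
      rw [hbase, Finset.sum_product]
      have e1 : ∀ x ∈ Cs ×ˢ E, ∑ y ∈ A ×ˢ Dst, χ (zf (x, y))
          = χ (x.1 * x.2⁻¹) *
            ∑ y ∈ A ×ˢ Dst, χ ((y.2 - g y.1 * h y.1) * (g y.1)⁻¹) := by
        intro x _
        rw [Finset.mul_sum]
        exact Finset.sum_congr rfl fun y _ => by rw [← map_mul]
      rw [Finset.sum_congr rfl e1, ← Finset.sum_mul]
      congr 1
      · rw [Finset.sum_product, hSC, hSE, Finset.sum_mul_sum]
        exact Finset.sum_congr rfl fun c _ => Finset.sum_congr rfl fun e _ => map_mul χ _ _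
      · rw [Finset.sum_product, hTT]
    calc ∑ χ : DirichletCharacter ℂ p, SC χ * SE χ * TT χ
        = ∑ χ : DirichletCharacter ℂ p, ∑ q ∈ base, χ (zf q) :=
          Finset.sum_congr rfl fun χ _ => (h1 χ).symm
      _ = ∑ q ∈ base, ∑ χ : DirichletCharacter ℂ p, χ (zf q) := Finset.sum_comm
      _ = ∑ q ∈ base, (if zf q = 1 then ((p - 1 : ℕ) : ℂ) else 0) :=
          Finset.sum_congr rfl fun q _ => HHaux.sum_chars _
      _ = ∑ q ∈ Q, ((p - 1 : ℕ) : ℂ) := (Finset.sum_filter _ _).symm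
      _ = ((p - 1 : ℕ) : ℂ) * (Q.card : ℂ) := by
          rw [Finset.sum_const, nsmul_eq_mul, mul_comm]
  -- Step 3: analytic estimate
  have hTb : ∀ χ : DirichletCharacter ℂ p, χ ≠ 1 →
      ‖TT χ‖ ≤ Real.sqrt ((A.card : ℝ) * ((m : ℝ) * ((p : ℝ) * Dst.card))) := by
    intro χ hχ
    have hb := HHaux.T_bound hχ A Dst (fun a => g a * h a) g m hmfib
    rw [← Real.sqrt_sq (norm_nonneg (TT χ))]
    exact Real.sqrt_le_sqrt hb
  have hSCo : ∑ χ : DirichletCharacter ℂ p, ‖SC χ‖ ^ 2 = ((p - 1 : ℕ) : ℝ) * Cs.card := by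
    have := HHaux.S_orth Cs (fun z => z) (fun s _ s' _ hss => hss) hCne0
    simpa using this
  have hSEo : ∑ χ : DirichletCharacter ℂ p, ‖SE χ‖ ^ 2 = ((p - 1 : ℕ) : ℝ) * E.card := by
    have := HHaux.S_orth E (fun z => z⁻¹) (fun s _ s' _ hss => inv_injective hss)
      (fun s hs => inv_ne_zero (hE0 s hs))
    simpa using this
  have hCSb : ∑ χ : DirichletCharacter ℂ p, ‖SC χ‖ * ‖SE χ‖
      ≤ Real.sqrt (((p - 1 : ℕ) : ℝ) * Cs.card) * Real.sqrt (((p - 1 : ℕ) : ℝ) * E.card) := by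
    have h2 := Finset.sum_mul_sq_le_sq_mul_sq Finset.univ
      (fun χ : DirichletCharacter ℂ p => ‖SC χ‖) (fun χ => ‖SE χ‖)
    have h3 : (0:ℝ) ≤ ∑ χ : DirichletCharacter ℂ p, ‖SC χ‖ * ‖SE χ‖ :=
      Finset.sum_nonneg fun χ _ => by positivity
    calc ∑ χ : DirichletCharacter ℂ p, ‖SC χ‖ * ‖SE χ‖
        = Real.sqrt ((∑ χ : DirichletCharacter ℂ p, ‖SC χ‖ * ‖SE χ‖) ^ 2) :=
          (Real.sqrt_sq h3).symm
      _ ≤ Real.sqrt ((∑ χ : DirichletCharacter ℂ p, ‖SC χ‖ ^ 2) *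
            ∑ χ : DirichletCharacter ℂ p, ‖SE χ‖ ^ 2) := Real.sqrt_le_sqrt h2
      _ = _ := by
          rw [hSCo, hSEo, Real.sqrt_mul (by positivity)]
  have hmain : ((p - 1 : ℕ) : ℝ) * (Q.card : ℝ)
      ≤ (Cs.card : ℝ) * (E.card : ℝ) * ((A.card : ℝ) * (Dst.card : ℝ))
        + (Real.sqrt (((p - 1 : ℕ) : ℝ) * Cs.card) * Real.sqrt (((p - 1 : ℕ) : ℝ) * E.card))
          * Real.sqrt ((A.card : ℝ) * ((m : ℝ) * ((p : ℝ) * Dst.card))) := by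
    have hnorm : ((p - 1 : ℕ) : ℝ) * (Q.card : ℝ) = ‖((p - 1 : ℕ) : ℂ) * (Q.card : ℂ)‖ := by
      rw [norm_mul]
      simp
    rw [hnorm, ← hId]
    have hstep1 : ‖∑ χ : DirichletCharacter ℂ p, SC χ * SE χ * TT χ‖
        ≤ ∑ χ : DirichletCharacter ℂ p, ‖SC χ‖ * ‖SE χ‖ * ‖TT χ‖ := by
      refine le_trans (norm_sum_le _ _) (le_of_eq (Finset.sum_congr rfl fun χ _ => ?_))
      rw [norm_mul, norm_mul]
    refine le_trans hstep1 ?_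
    rw [← Finset.add_sum_erase _ _ (Finset.mem_univ (1 : DirichletCharacter ℂ p))]
    refine add_le_add ?_ ?_
    · -- trivial character term
      have hsc : ‖SC 1‖ ≤ (Cs.card : ℝ) := by
        refine le_trans (norm_sum_le _ _) ?_
        calc ∑ c ∈ Cs, ‖(1 : DirichletCharacter ℂ p) c‖ ≤ ∑ _c ∈ Cs, (1:ℝ) :=
              Finset.sum_le_sum fun c _ => HHaux.norm_char_le_one _ _
          _ = (Cs.card : ℝ) := by simp
      have hse : ‖SE 1‖ ≤ (E.card : ℝ) := by
        refine le_trans (norm_sum_le _ _) ?_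
        calc ∑ e ∈ E, ‖(1 : DirichletCharacter ℂ p) e⁻¹‖ ≤ ∑ _e ∈ E, (1:ℝ) :=
              Finset.sum_le_sum fun e _ => HHaux.norm_char_le_one _ _
          _ = (E.card : ℝ) := by simp
      have htt : ‖TT 1‖ ≤ (A.card : ℝ) * (Dst.card : ℝ) := by
        refine le_trans (norm_sum_le _ _) ?_
        calc ∑ a ∈ A, ‖∑ d ∈ Dst, (1 : DirichletCharacter ℂ p) ((d - g a * h a) * (g a)⁻¹)‖
            ≤ ∑ _a ∈ A, (Dst.card : ℝ) := by
              refine Finset.sum_le_sum fun a _ => ?_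
              refine le_trans (norm_sum_le _ _) ?_
              calc ∑ d ∈ Dst, ‖(1 : DirichletCharacter ℂ p) ((d - g a * h a) * (g a)⁻¹)‖
                  ≤ ∑ _d ∈ Dst, (1:ℝ) := Finset.sum_le_sum fun d _ => HHaux.norm_char_le_one _ _
                _ = (Dst.card : ℝ) := by simp
          _ = (A.card : ℝ) * (Dst.card : ℝ) := by simp [mul_comm]
      exact mul_le_mul (mul_le_mul hsc hse (norm_nonneg _) (by positivity)) htt
        (norm_nonneg _) (by positivity)
    · -- nontrivial characters
      set M := Real.sqrt ((A.card : ℝ) * ((m : ℝ) * ((p : ℝ) * Dst.card))) with hM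
      calc ∑ χ ∈ Finset.univ.erase (1 : DirichletCharacter ℂ p), ‖SC χ‖ * ‖SE χ‖ * ‖TT χ‖
          ≤ ∑ χ ∈ Finset.univ.erase (1 : DirichletCharacter ℂ p), ‖SC χ‖ * ‖SE χ‖ * M := by
            refine Finset.sum_le_sum fun χ hχ => ?_
            exact mul_le_mul_of_nonneg_left (hTb χ (Finset.mem_erase.mp hχ).1) (by positivity)
        _ = (∑ χ ∈ Finset.univ.erase (1 : DirichletCharacter ℂ p), ‖SC χ‖ * ‖SE χ‖) * M := by
            rw [Finset.sum_mul]
        _ ≤ (∑ χ : DirichletCharacter ℂ p, ‖SC χ‖ * ‖SE χ‖) * M := by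
            refine mul_le_mul_of_nonneg_right ?_ (by positivity)
            refine Finset.sum_le_sum_of_subset_of_nonneg (Finset.subset_univ _)
              fun χ _ _ => by positivity
        _ ≤ (Real.sqrt (((p - 1 : ℕ) : ℝ) * Cs.card)
              * Real.sqrt (((p - 1 : ℕ) : ℝ) * E.card)) * M :=
            mul_le_mul_of_nonneg_right hCSb (by positivity)
  -- Step 4: final algebra
  have ha1 : (1:ℝ) ≤ (A.card : ℝ) := by exact_mod_cast Finset.card_pos.mpr hA
  have hb1 : (1:ℝ) ≤ (B.card : ℝ) := by exact_mod_cast Finset.card_pos.mpr hB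
  have hc1 : (1:ℝ) ≤ (Cs.card : ℝ) := by exact_mod_cast Finset.card_pos.mpr hC
  have hd1 : (1:ℝ) ≤ (Dst.card : ℝ) := by
    exact_mod_cast Finset.card_pos.mpr (Finset.Nonempty.image₂ hA hB)
  have he1 : (1:ℝ) ≤ (E.card : ℝ) := by
    exact_mod_cast Finset.card_pos.mpr (Finset.Nonempty.mul hB hC)
  have hmge : (1:ℝ) ≤ (m : ℝ) := by exact_mod_cast hm1
  have hpge : (2:ℝ) ≤ (p : ℝ) := by exact_mod_cast hp.out.two_le
  have hP1 : ((p - 1 : ℕ) : ℝ) = (p : ℝ) - 1 := by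
    rw [Nat.cast_sub hp.out.one_le]
    norm_num
  have hP1ge : (1:ℝ) ≤ ((p - 1 : ℕ) : ℝ) := by rw [hP1]; linarith
  have hq : ((p - 1 : ℕ) : ℝ) * ((A.card : ℝ) * (B.card : ℝ) * (Cs.card : ℝ))
      ≤ ((p - 1 : ℕ) : ℝ) * (Q.card : ℝ) := by
    refine mul_le_mul_of_nonneg_left ?_ (by positivity)
    exact_mod_cast hQcard
  have keyIneq : ((p - 1 : ℕ) : ℝ) * ((A.card : ℝ) * (B.card : ℝ) * (Cs.card : ℝ))
      ≤ (Cs.card : ℝ) * (E.card : ℝ) * ((A.card : ℝ) * (Dst.card : ℝ))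
        + (Real.sqrt (((p - 1 : ℕ) : ℝ) * Cs.card) * Real.sqrt (((p - 1 : ℕ) : ℝ) * E.card))
          * Real.sqrt ((A.card : ℝ) * ((m : ℝ) * ((p : ℝ) * Dst.card))) :=
    le_trans hq hmain
  by_cases hcase : ((p - 1 : ℕ) : ℝ) * ((A.card : ℝ) * (B.card : ℝ) * (Cs.card : ℝ))
      ≤ 2 * ((Cs.card : ℝ) * (E.card : ℝ) * ((A.card : ℝ) * (Dst.card : ℝ)))
  · -- case T2
    have hac : (0:ℝ) < (A.card : ℝ) * (Cs.card : ℝ) := by positivity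
    have h' : (((p - 1 : ℕ) : ℝ) * (B.card : ℝ)) * ((A.card : ℝ) * (Cs.card : ℝ))
        ≤ (2 * ((Dst.card : ℝ) * (E.card : ℝ))) * ((A.card : ℝ) * (Cs.card : ℝ)) := by
      nlinarith [hcase]
    have hkey : ((p - 1 : ℕ) : ℝ) * (B.card : ℝ) ≤ 2 * ((Dst.card : ℝ) * (E.card : ℝ)) :=
      le_of_mul_le_mul_right h' hac
    refine le_trans (mul_le_mul_of_nonneg_left
      (min_le_right _ _) (by norm_num : (0:ℝ) ≤ 1/4)) ?_
    have hdiv : (p : ℝ) * (B.card : ℝ) / (m : ℝ) ≤ (p : ℝ) * (B.card : ℝ) :=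
      div_le_self (by positivity) hmge
    have hPle : (p : ℝ) ≤ 2 * ((p - 1 : ℕ) : ℝ) := by rw [hP1]; linarith
    calc (1/4 : ℝ) * ((p : ℝ) * (B.card : ℝ) / (m : ℝ))
        ≤ (1/4 : ℝ) * ((p : ℝ) * (B.card : ℝ)) := by linarith
      _ ≤ (Dst.card : ℝ) * (E.card : ℝ) := by nlinarith
  · -- case T1
    push_neg at hcase
    have h2' : ((p - 1 : ℕ) : ℝ) * ((A.card : ℝ) * (B.card : ℝ) * (Cs.card : ℝ))
        ≤ 2 * ((Real.sqrt (((p - 1 : ℕ) : ℝ) * Cs.card)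
            * Real.sqrt (((p - 1 : ℕ) : ℝ) * E.card))
          * Real.sqrt ((A.card : ℝ) * ((m : ℝ) * ((p : ℝ) * Dst.card)))) := by
      linarith
    have hsq : (((p - 1 : ℕ) : ℝ) * ((A.card : ℝ) * (B.card : ℝ) * (Cs.card : ℝ))) ^ 2
        ≤ (2 * ((Real.sqrt (((p - 1 : ℕ) : ℝ) * Cs.card)
            * Real.sqrt (((p - 1 : ℕ) : ℝ) * E.card))
          * Real.sqrt ((A.card : ℝ) * ((m : ℝ) * ((p : ℝ) * Dst.card))))) ^ 2 := by
      refine pow_le_pow_left₀ (by positivity) h2' 2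
    have e1 : Real.sqrt (((p - 1 : ℕ) : ℝ) * Cs.card) ^ 2 = ((p - 1 : ℕ) : ℝ) * Cs.card :=
      Real.sq_sqrt (by positivity)
    have e2 : Real.sqrt (((p - 1 : ℕ) : ℝ) * E.card) ^ 2 = ((p - 1 : ℕ) : ℝ) * E.card :=
      Real.sq_sqrt (by positivity)
    have e3 : Real.sqrt ((A.card : ℝ) * ((m : ℝ) * ((p : ℝ) * Dst.card))) ^ 2
        = (A.card : ℝ) * ((m : ℝ) * ((p : ℝ) * Dst.card)) := Real.sq_sqrt (by positivity)
    have hsq2 : (((p - 1 : ℕ) : ℝ) * ((A.card : ℝ) * (B.card : ℝ) * (Cs.card : ℝ))) ^ 2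
        ≤ 4 * ((((p - 1 : ℕ) : ℝ) * Cs.card) * ((((p - 1 : ℕ) : ℝ) * E.card)
            * ((A.card : ℝ) * ((m : ℝ) * ((p : ℝ) * Dst.card))))) := by
      refine le_trans hsq (le_of_eq ?_)
      rw [mul_pow, mul_pow, mul_pow, e1, e2, e3]
      ring
    have hcancel : ((A.card : ℝ) * (B.card : ℝ) ^ 2 * (Cs.card : ℝ))
          * (((p - 1 : ℕ) : ℝ) ^ 2 * ((A.card : ℝ) * (Cs.card : ℝ)))
        ≤ (4 * ((m : ℝ) * ((p : ℝ) * ((Dst.card : ℝ) * (E.card : ℝ)))))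
          * (((p - 1 : ℕ) : ℝ) ^ 2 * ((A.card : ℝ) * (Cs.card : ℝ))) := by
      calc ((A.card : ℝ) * (B.card : ℝ) ^ 2 * (Cs.card : ℝ))
            * (((p - 1 : ℕ) : ℝ) ^ 2 * ((A.card : ℝ) * (Cs.card : ℝ)))
          = (((p - 1 : ℕ) : ℝ) * ((A.card : ℝ) * (B.card : ℝ) * (Cs.card : ℝ))) ^ 2 := by ring
        _ ≤ 4 * ((((p - 1 : ℕ) : ℝ) * Cs.card) * ((((p - 1 : ℕ) : ℝ) * E.card)
            * ((A.card : ℝ) * ((m : ℝ) * ((p : ℝ) * Dst.card))))) := hsq2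
        _ = (4 * ((m : ℝ) * ((p : ℝ) * ((Dst.card : ℝ) * (E.card : ℝ)))))
            * (((p - 1 : ℕ) : ℝ) ^ 2 * ((A.card : ℝ) * (Cs.card : ℝ))) := by ring
    have hkey3 : (A.card : ℝ) * (B.card : ℝ) ^ 2 * (Cs.card : ℝ)
        ≤ 4 * ((m : ℝ) * ((p : ℝ) * ((Dst.card : ℝ) * (E.card : ℝ)))) :=
      le_of_mul_le_mul_right hcancel (by positivity)
    refine le_trans (mul_le_mul_of_nonneg_left
      (min_le_left _ _) (by norm_num : (0:ℝ) ≤ 1/4)) ?_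
    have hPm : (0:ℝ) < (p : ℝ) * (m : ℝ) ^ 2 := by positivity
    have hfinal : (A.card : ℝ) * (B.card : ℝ) ^ 2 * (Cs.card : ℝ)
        ≤ 4 * ((Dst.card : ℝ) * (E.card : ℝ)) * ((p : ℝ) * (m : ℝ) ^ 2) := by
      have hmm : (0:ℝ) ≤ (m : ℝ) * ((m : ℝ) - 1) :=
        mul_nonneg (by linarith) (by linarith)
      have hpde : (0:ℝ) ≤ (p : ℝ) * ((Dst.card : ℝ) * (E.card : ℝ)) := by positivity
      nlinarith [hkey3, mul_nonneg hpde hmm]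
    have : (A.card : ℝ) * (B.card : ℝ) ^ 2 * (Cs.card : ℝ) / ((p : ℝ) * (m : ℝ) ^ 2)
        ≤ 4 * ((Dst.card : ℝ) * (E.card : ℝ)) := (div_le_iff₀ hPm).mpr hfinal
    linarith
end

section
/- There exists an absolute constant C > 0 such that the following holds. Let p be an odd prime, G a subgroup of the multiplicative group 𝔽_p*, and g, h : G → 𝔽_p* arbitrary functions. Define f(x,y) = g(x)(h(x)+y) on G × 𝔽_p* and set m = μ(g). Then for all nonempty finite subsets A ⊆ G and B, C ⊆ 𝔽_p*, one has |f(A,B)| · |B+C| ≥ C · min{ |A||B|²|C| / (p m²) , p|B| / m }. -/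
open Finset Pointwise

section aux
variable {p : ℕ} [Fact p.Prime]

lemma HH_lines_card :
    (((Finset.univ : Finset (ZMod p × ZMod p)).filter fun ℓ => ℓ.1 ≠ 0)).card
      = (p - 1) * p := by
  have h : ((Finset.univ : Finset (ZMod p × ZMod p)).filter fun ℓ => ℓ.1 ≠ 0)
      = ((Finset.univ : Finset (ZMod p)).filter fun t => t ≠ 0) ×ˢ
        (Finset.univ : Finset (ZMod p)) := by
    ext ℓ
    simp [Finset.mem_product]
  rw [h, Finset.card_product, Finset.filter_ne',
    Finset.card_erase_of_mem (Finset.mem_univ 0), Finset.card_univ, ZMod.card]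

lemma HH_lines_through (q : ZMod p × ZMod p) :
    ((((Finset.univ : Finset (ZMod p × ZMod p)).filter fun ℓ => ℓ.1 ≠ 0)).filter
        fun ℓ => q.2 = ℓ.1 * q.1 + ℓ.2).card = p - 1 := by
  have h : ((((Finset.univ : Finset (ZMod p × ZMod p)).filter fun ℓ => ℓ.1 ≠ 0)).filter
        fun ℓ => q.2 = ℓ.1 * q.1 + ℓ.2)
      = (((Finset.univ : Finset (ZMod p)).filter fun t => t ≠ 0)).image
          (fun t => (t, q.2 - t * q.1)) := by
    ext ℓ
    obtain ⟨l1, l2⟩ := ℓ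
    simp only [Finset.mem_filter, Finset.mem_image, Finset.mem_univ, true_and]
    constructor
    · rintro ⟨h1, h2⟩
      exact ⟨l1, h1, by rw [Prod.mk.injEq]; exact ⟨rfl, by rw [h2]; ring⟩⟩
    · rintro ⟨t, ht, hteq⟩
      rw [Prod.mk.injEq] at hteq
      obtain ⟨rfl, rfl⟩ := hteq
      exact ⟨ht, by ring⟩
  rw [h, Finset.card_image_of_injective _ (fun a b hab => congrArg Prod.fst hab),
    Finset.filter_ne', Finset.card_erase_of_mem (Finset.mem_univ 0),
    Finset.card_univ, ZMod.card]

lemma HH_two_points {q q' : ZMod p × ZMod p} (hqq : q ≠ q') :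
    ((((Finset.univ : Finset (ZMod p × ZMod p)).filter fun ℓ => ℓ.1 ≠ 0)).filter
        fun ℓ => q.2 = ℓ.1 * q.1 + ℓ.2 ∧ q'.2 = ℓ.1 * q'.1 + ℓ.2).card ≤ 1 := by
  rw [Finset.card_le_one]
  intro ℓ hℓ ℓ' hℓ'
  simp only [Finset.mem_filter, Finset.mem_univ, true_and] at hℓ hℓ'
  obtain ⟨-, h1, h2⟩ := hℓ
  obtain ⟨-, h1', h2'⟩ := hℓ'
  by_cases hx : q.1 = q'.1
  · exfalso
    apply hqq
    have : q.2 = q'.2 := by rw [h1, h2, hx]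
    exact Prod.ext hx this
  · have e1 : (ℓ.1 - ℓ'.1) * (q.1 - q'.1) = 0 := by
      have a1 : ℓ.1 * q.1 + ℓ.2 = ℓ'.1 * q.1 + ℓ'.2 := by rw [← h1, ← h1']
      have a2 : ℓ.1 * q'.1 + ℓ.2 = ℓ'.1 * q'.1 + ℓ'.2 := by rw [← h2, ← h2']
      linear_combination a1 - a2
    have e2 : ℓ.1 = ℓ'.1 := by
      rcases mul_eq_zero.mp e1 with h | h
      · linear_combination h
      · exact absurd (by linear_combination h) hx
    have e3 : ℓ.2 = ℓ'.2 := by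
      have a1 : ℓ.1 * q.1 + ℓ.2 = ℓ'.1 * q.1 + ℓ'.2 := by rw [← h1, ← h1']
      linear_combination a1 - q.1 * e2
    exact Prod.ext e2 e3

end aux

set_option maxHeartbeats 1000000 in
theorem hegyvari_hennecart_sum :
    ∃ C > (0:ℝ),
      ∀ (p : ℕ) [Fact p.Prime], p ≠ 2 →
      ∀ G : Finset (ZMod p),
      (0:ZMod p) ∉ G → (1:ZMod p) ∈ G →
      (∀ x ∈ G, ∀ y ∈ G, x * y ∈ G) → (∀ x ∈ G, x⁻¹ ∈ G) →
      ∀ g h : ZMod p → ZMod p,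
      (∀ x ∈ G, g x ≠ 0) → (∀ x ∈ G, h x ≠ 0) →
      ∀ A B Cs : Finset (ZMod p),
      A ⊆ G → A.Nonempty → B.Nonempty → Cs.Nonempty →
      (0:ZMod p) ∉ B → (0:ZMod p) ∉ Cs →
      C * min ((A.card : ℝ) * (B.card : ℝ) ^ 2 * (Cs.card : ℝ) /
                ((p : ℝ) * ((muOn G g : ℕ) : ℝ) ^ 2))
              ((p : ℝ) * (B.card : ℝ) / ((muOn G g : ℕ) : ℝ)) ≤
        ((Finset.image₂ (fun x y => g x * (h x + y)) A B).card : ℝ) * ((B + Cs).card : ℝ) := by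
  classical
  refine ⟨1/8, by norm_num, ?_⟩
  intro p hp hp2 G hG0 hG1 hGmul hGinv g h hg0 hh0 A B Cs hAG hA hB hC hB0 hC0
  have hp1 : 1 < p := hp.out.one_lt
  have hppos : (0:ℝ) < (p:ℝ) := by exact_mod_cast Nat.lt_of_lt_of_le Nat.zero_lt_one hp1.le
  set M : ℕ := muOn G g with hM
  obtain ⟨a, haA⟩ := hA
  have haG : a ∈ G := hAG haA
  have hga : g a ≠ 0 := hg0 a haG
  have hM1 : 1 ≤ M := by
    have h1 : 1 ≤ (G.filter fun x => g x = g a).card :=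
      Finset.card_pos.mpr ⟨a, Finset.mem_filter.mpr ⟨haG, rfl⟩⟩
    refine le_trans h1 ?_
    rw [hM, muOn]
    exact Finset.le_sup (f := fun t => (G.filter fun x => g x = t).card)
      (Finset.mem_filter.mpr ⟨Finset.mem_univ _, hga⟩)
  have hfiber : ∀ t : ZMod p, t ≠ 0 → (A.filter fun x => g x = t).card ≤ M := by
    intro t ht
    refine le_trans (Finset.card_le_card (Finset.filter_subset_filter _ hAG)) ?_
    rw [hM, muOn]
    exact Finset.le_sup (f := fun t => (G.filter fun x => g x = t).card)
      (Finset.mem_filter.mpr ⟨Finset.mem_univ _, ht⟩)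
  set D := Finset.image₂ (fun x y => g x * (h x + y)) A B with hD
  set E := B + Cs with hE
  set P := E ×ˢ D with hP
  set Lall := ((Finset.univ : Finset (ZMod p × ZMod p)).filter fun ℓ => ℓ.1 ≠ 0) with hLall
  set L := (A ×ˢ Cs).image (fun pr => (g pr.1, g pr.1 * h pr.1 - g pr.1 * pr.2)) with hL
  set n : ZMod p × ZMod p → ℕ := fun ℓ => (P.filter fun q => q.2 = ℓ.1 * q.1 + ℓ.2).card with hn
  have hLsub : L ⊆ Lall := by
    intro ℓ hℓ
    rw [hL] at hℓ
    obtain ⟨pr, hpr, rfl⟩ := Finset.mem_image.mp hℓ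
    have h1 := (Finset.mem_product.mp hpr).1
    exact Finset.mem_filter.mpr ⟨Finset.mem_univ _, hg0 _ (hAG h1)⟩
  -- the triple set and incidence map
  set T := A ×ˢ (B ×ˢ Cs) with hT
  set Φ : ZMod p × (ZMod p × ZMod p) → (ZMod p × ZMod p) × (ZMod p × ZMod p) := fun z =>
    ((g z.1, g z.1 * h z.1 - g z.1 * z.2.2), (z.2.1 + z.2.2, g z.1 * (h z.1 + z.2.1))) with hΦ
  have hmemT : ∀ z ∈ T, z.1 ∈ A ∧ z.2.1 ∈ B ∧ z.2.2 ∈ Cs := by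
    intro z hz
    rw [hT] at hz
    have h1 := Finset.mem_product.mp hz
    have h2 := Finset.mem_product.mp h1.2
    exact ⟨h1.1, h2.1, h2.2⟩
  have hTcard : T.card = A.card * B.card * Cs.card := by
    rw [hT, Finset.card_product, Finset.card_product, mul_assoc]
  have hstep1 : T.card ≤ M * (T.image Φ).card := by
    apply Finset.card_le_mul_card_image
    intro y hy
    obtain ⟨z₀, hz₀, rfl⟩ := Finset.mem_image.mp hy
    have hz₀A := (hmemT z₀ hz₀).1
    calc (T.filter fun z => Φ z = Φ z₀).card
        ≤ (A.filter fun x => g x = g z₀.1).card := by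
          apply Finset.card_le_card_of_injOn (fun z => z.1)
          · intro z hz
            rw [Finset.mem_coe, Finset.mem_filter] at hz
            obtain ⟨hzT, hzeq⟩ := hz
            have h1 : g z.1 = g z₀.1 := congrArg (fun w => w.1.1) hzeq
            exact Finset.mem_coe.mpr (Finset.mem_filter.mpr ⟨(hmemT z hzT).1, h1⟩)
          · intro z hz z' hz' hzz
            simp only [Finset.coe_filter, Set.mem_setOf_eq] at hz hz'
            obtain ⟨hzT, hzeq⟩ := hz
            obtain ⟨hz'T, hz'eq⟩ := hz'
            have heq : Φ z = Φ z' := hzeq.trans hz'eq.symm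
            have hzz1 : z.1 = z'.1 := hzz
            have hgz : g z.1 ≠ 0 := hg0 _ (hAG (hmemT z hzT).1)
            have e2 : g z.1 * h z.1 - g z.1 * z.2.2 = g z'.1 * h z'.1 - g z'.1 * z'.2.2 :=
              congrArg (fun w => w.1.2) heq
            have e3 : z.2.1 + z.2.2 = z'.2.1 + z'.2.2 := congrArg (fun w => w.2.1) heq
            rw [← hzz1] at e2
            have e4 : z.2.2 = z'.2.2 := by
              apply mul_left_cancel₀ hgz
              linear_combination -e2
            have e5 : z.2.1 = z'.2.1 := by linear_combination e3 - e4
            exact Prod.ext hzz1 (Prod.ext e5 e4)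
      _ ≤ M := hfiber _ (hg0 _ (hAG hz₀A))
  have hstep2 : (T.image Φ).card ≤ ∑ ℓ ∈ L, n ℓ := by
    have hWmem : ∀ w ∈ T.image Φ, w.1 ∈ L := by
      intro w hw
      obtain ⟨z, hz, rfl⟩ := Finset.mem_image.mp hw
      obtain ⟨hzA, hzB, hzC⟩ := hmemT z hz
      rw [hL]
      exact Finset.mem_image.mpr ⟨(z.1, z.2.2),
        Finset.mem_product.mpr ⟨hzA, hzC⟩, rfl⟩
    rw [Finset.card_eq_sum_card_fiberwise hWmem]
    apply Finset.sum_le_sum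
    intro ℓ hℓ
    apply Finset.card_le_card_of_injOn (fun w => w.2)
    · intro w hw
      rw [Finset.mem_coe, Finset.mem_filter] at hw
      obtain ⟨hwim, hwℓ⟩ := hw
      obtain ⟨z, hz, rfl⟩ := Finset.mem_image.mp hwim
      obtain ⟨hzA, hzB, hzC⟩ := hmemT z hz
      refine Finset.mem_coe.mpr (Finset.mem_filter.mpr ?_)
      constructor
      · rw [hP]
        exact Finset.mem_product.mpr
          ⟨Finset.add_mem_add hzB hzC, Finset.mem_image₂_of_mem hzA hzB⟩
      · rw [← hwℓ]
        show g z.1 * (h z.1 + z.2.1)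
          = g z.1 * (z.2.1 + z.2.2) + (g z.1 * h z.1 - g z.1 * z.2.2)
        ring
    · intro w hw w' hw' hww
      rw [Finset.mem_coe, Finset.mem_filter] at hw hw'
      exact Prod.ext (hw.2.trans hw'.2.symm) hww
  have hcount : A.card * B.card * Cs.card ≤ M * ∑ ℓ ∈ L, n ℓ := by
    rw [← hTcard]
    exact hstep1.trans (Nat.mul_le_mul_left M hstep2)
  -- second moment bounds over all lines
  have hsumA : ∑ ℓ ∈ Lall, n ℓ = P.card * (p - 1) := by
    have h1 : ∑ ℓ ∈ Lall, n ℓ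
        = ∑ q ∈ P, ((Lall.filter fun ℓ => q.2 = ℓ.1 * q.1 + ℓ.2)).card := by
      simp only [hn, Finset.card_filter]
      exact Finset.sum_comm
    rw [h1]
    rw [Finset.sum_congr rfl (fun q _ => HH_lines_through q), Finset.sum_const,
      smul_eq_mul]
  have hsumB : ∑ ℓ ∈ Lall, (n ℓ)^2 ≤ P.card * (p - 1) + P.card * P.card := by
    have h1 : ∑ ℓ ∈ Lall, (n ℓ)^2
        = ∑ q ∈ P, ∑ q' ∈ P,
            ((Lall.filter fun ℓ => q.2 = ℓ.1 * q.1 + ℓ.2 ∧ q'.2 = ℓ.1 * q'.1 + ℓ.2)).card := by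
      simp only [hn, Finset.card_filter, sq, Finset.sum_mul_sum]
      rw [Finset.sum_comm]
      refine Finset.sum_congr rfl fun q hq => ?_
      rw [Finset.sum_comm]
      refine Finset.sum_congr rfl fun q' hq' => ?_
      refine Finset.sum_congr rfl fun ℓ hℓ => ?_
      by_cases e1 : q.2 = ℓ.1 * q.1 + ℓ.2 <;> by_cases e2 : q'.2 = ℓ.1 * q'.1 + ℓ.2 <;>
        simp [e1, e2]
    rw [h1]
    calc ∑ q ∈ P, ∑ q' ∈ P,
            ((Lall.filter fun ℓ => q.2 = ℓ.1 * q.1 + ℓ.2 ∧ q'.2 = ℓ.1 * q'.1 + ℓ.2)).card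
        ≤ ∑ q ∈ P, ∑ q' ∈ P, ((if q = q' then p - 1 else 0) + 1) := by
          apply Finset.sum_le_sum
          intro q hq
          apply Finset.sum_le_sum
          intro q' hq'
          by_cases hqq : q = q'
          · subst hqq
            rw [if_pos rfl]
            have heq : (Lall.filter fun ℓ => q.2 = ℓ.1 * q.1 + ℓ.2 ∧ q.2 = ℓ.1 * q.1 + ℓ.2)
                = Lall.filter fun ℓ => q.2 = ℓ.1 * q.1 + ℓ.2 := by
              simp [and_self]
            rw [heq, HH_lines_through q]
            omega
          · rw [if_neg hqq]
            have := HH_two_points hqq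
            rw [hLall]
            omega
      _ = P.card * (p - 1) + P.card * P.card := by
          have hrow : ∀ q ∈ P, ∑ q' ∈ P, ((if q = q' then p - 1 else 0) + 1)
              = (p - 1) + P.card := by
            intro q hq
            rw [Finset.sum_add_distrib, Finset.sum_const, Finset.sum_ite_eq, if_pos hq,
              smul_eq_mul, mul_one]
          rw [Finset.sum_congr rfl hrow, Finset.sum_const, smul_eq_mul]
          ring
  -- move to the reals
  have hpm1 : ((p - 1 : ℕ) : ℝ) = (p:ℝ) - 1 := by
    rw [Nat.cast_sub hp1.le, Nat.cast_one]
  have hMpos : (0:ℝ) < (M:ℝ) := by exact_mod_cast hM1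
  have hLApos : (0:ℝ) < (A.card:ℝ) := by
    exact_mod_cast Finset.card_pos.mpr ⟨a, haA⟩
  have hLBpos : (0:ℝ) < (B.card:ℝ) := by exact_mod_cast Finset.card_pos.mpr hB
  have hLCpos : (0:ℝ) < (Cs.card:ℝ) := by exact_mod_cast Finset.card_pos.mpr hC
  have hPcard : (P.card : ℝ) = (E.card:ℝ) * (D.card:ℝ) := by
    rw [hP, Finset.card_product]
    push_cast
    ring
  have hPle : (P.card:ℝ) ≤ (p:ℝ)^2 := by
    have h1 : P.card ≤ p * p := by
      have := Finset.card_le_univ P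
      rwa [Fintype.card_prod, ZMod.card] at this
    have h2 : ((p*p : ℕ):ℝ) = (p:ℝ)^2 := by push_cast; ring
    rw [← h2]
    exact_mod_cast h1
  set c : ℝ := (P.card:ℝ)/(p:ℝ) with hc
  have hSA : ∑ ℓ ∈ Lall, ((n ℓ : ℝ)) = (P.card:ℝ) * ((p:ℝ) - 1) := by
    rw [← hpm1, ← Nat.cast_sum]
    exact_mod_cast congrArg (fun k : ℕ => (k:ℝ)) hsumA
  have hSB : ∑ ℓ ∈ Lall, ((n ℓ : ℝ))^2 ≤ (P.card:ℝ) * ((p:ℝ) - 1) + (P.card:ℝ)^2 := by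
    have h1 : ((∑ ℓ ∈ Lall, (n ℓ)^2 : ℕ) : ℝ)
        ≤ ((P.card * (p - 1) + P.card * P.card : ℕ) : ℝ) := by exact_mod_cast hsumB
    push_cast at h1
    rw [hpm1] at h1
    calc ∑ ℓ ∈ Lall, ((n ℓ : ℝ))^2 ≤ (P.card:ℝ) * ((p:ℝ) - 1) + (P.card:ℝ) * (P.card:ℝ) := h1
      _ = (P.card:ℝ) * ((p:ℝ) - 1) + (P.card:ℝ)^2 := by ring
  have hLallR : ((Lall.card:ℕ):ℝ) = ((p:ℝ) - 1) * (p:ℝ) := by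
    rw [hLall, HH_lines_card, Nat.cast_mul, hpm1]
  have hSS : ∑ ℓ ∈ Lall, ((n ℓ : ℝ) - c)^2 ≤ 2 * (P.card:ℝ) * (p:ℝ) := by
    have expand : ∑ ℓ ∈ Lall, ((n ℓ : ℝ) - c)^2
        = (∑ ℓ ∈ Lall, ((n ℓ : ℝ))^2) - 2*c*(∑ ℓ ∈ Lall, ((n ℓ : ℝ)))
          + (Lall.card:ℝ)*c^2 := by
      rw [Finset.sum_congr rfl (fun ℓ _ => by ring :
        ∀ ℓ ∈ Lall, ((n ℓ : ℝ) - c)^2 = ((n ℓ:ℝ))^2 - 2*c*(n ℓ:ℝ) + c^2)]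
      rw [Finset.sum_add_distrib, Finset.sum_sub_distrib, ← Finset.mul_sum,
        Finset.sum_const, nsmul_eq_mul]
    rw [expand, hSA, hLallR, hc]
    have hPC : (0:ℝ) ≤ (P.card:ℝ) := Nat.cast_nonneg _
    have key : -(2*((P.card:ℝ)/(p:ℝ))*((P.card:ℝ)*((p:ℝ)-1)))
        + (((p:ℝ)-1)*(p:ℝ))*((P.card:ℝ)/(p:ℝ))^2
        = -((P.card:ℝ)^2*((p:ℝ)-1)/(p:ℝ)) := by
      field_simp
      ring
    have i1 : (P.card:ℝ)^2 - (P.card:ℝ)^2*((p:ℝ)-1)/(p:ℝ) = (P.card:ℝ)^2/(p:ℝ) := by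
      field_simp
      ring
    have i2 : (P.card:ℝ)^2/(p:ℝ) ≤ (P.card:ℝ)*(p:ℝ) := by
      rw [div_le_iff₀ hppos]
      calc (P.card:ℝ)^2 ≤ (P.card:ℝ)*(p:ℝ)^2 := by nlinarith
        _ = (P.card:ℝ)*(p:ℝ)*(p:ℝ) := by ring
    have i3 : (P.card:ℝ)*((p:ℝ)-1) ≤ (P.card:ℝ)*(p:ℝ) :=
      mul_le_mul_of_nonneg_left (by linarith) hPC
    linarith [hSB, key, i1, i2, i3]
  -- Cauchy–Schwarz
  have hCS : (∑ ℓ ∈ L, ((n ℓ : ℝ) - c))^2 ≤ (L.card:ℝ) * (2*(P.card:ℝ)*(p:ℝ)) := by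
    have h1 := Finset.sum_mul_sq_le_sq_mul_sq L (fun _ => (1:ℝ)) (fun ℓ => (n ℓ : ℝ) - c)
    simp only [one_mul, one_pow] at h1
    have h2 : ∑ ℓ ∈ L, ((n ℓ : ℝ) - c)^2 ≤ ∑ ℓ ∈ Lall, ((n ℓ : ℝ) - c)^2 :=
      Finset.sum_le_sum_of_subset_of_nonneg hLsub (fun _ _ _ => sq_nonneg _)
    have h3 : (∑ _ℓ ∈ L, (1:ℝ)) = (L.card:ℝ) := by
      rw [Finset.sum_const, nsmul_eq_mul, mul_one]
    calc (∑ ℓ ∈ L, ((n ℓ : ℝ) - c))^2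
        ≤ (∑ _ℓ ∈ L, (1:ℝ)) * ∑ ℓ ∈ L, ((n ℓ : ℝ) - c)^2 := h1
      _ ≤ (L.card:ℝ) * (2*(P.card:ℝ)*(p:ℝ)) := by
          rw [h3]
          exact mul_le_mul_of_nonneg_left (h2.trans hSS) (Nat.cast_nonneg _)
  have hIR : (∑ ℓ ∈ L, ((n ℓ : ℝ)))
      ≤ (L.card:ℝ) * c + Real.sqrt ((L.card:ℝ) * (2*(P.card:ℝ)*(p:ℝ))) := by
    have h1 : ∑ ℓ ∈ L, ((n ℓ : ℝ)) = ∑ ℓ ∈ L, ((n ℓ : ℝ) - c) + (L.card:ℝ)*c := by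
      rw [Finset.sum_sub_distrib, Finset.sum_const, nsmul_eq_mul]
      ring
    have h2 : ∑ ℓ ∈ L, ((n ℓ : ℝ) - c) ≤ Real.sqrt ((L.card:ℝ) * (2*(P.card:ℝ)*(p:ℝ))) := by
      calc ∑ ℓ ∈ L, ((n ℓ : ℝ) - c) ≤ |∑ ℓ ∈ L, ((n ℓ : ℝ) - c)| := le_abs_self _
        _ = Real.sqrt ((∑ ℓ ∈ L, ((n ℓ : ℝ) - c))^2) := (Real.sqrt_sq_eq_abs _).symm
        _ ≤ _ := Real.sqrt_le_sqrt hCS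
    linarith
  -- assemble master inequality
  have hLle : (L.card:ℝ) ≤ (A.card:ℝ) * (Cs.card:ℝ) := by
    have h1 : L.card ≤ A.card * Cs.card := by
      rw [hL]
      exact le_trans Finset.card_image_le (le_of_eq (Finset.card_product _ _))
    exact_mod_cast h1
  set X : ℝ := ((D.card:ℝ) * (E.card:ℝ)) with hX
  have hXnn : (0:ℝ) ≤ X := by positivity
  have hcountR : (A.card:ℝ) * (B.card:ℝ) * (Cs.card:ℝ) ≤ (M:ℝ) * ∑ ℓ ∈ L, ((n ℓ : ℝ)) := by
    have h1 : ((A.card * B.card * Cs.card : ℕ):ℝ) ≤ ((M * ∑ ℓ ∈ L, n ℓ : ℕ):ℝ) := by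
      exact_mod_cast hcount
    push_cast at h1
    exact h1
  have hPX : (P.card:ℝ) = X := by rw [hPcard, hX]; ring
  clear_value M D E P Lall L n T Φ c X
  have hmaster : (A.card:ℝ) * (B.card:ℝ) * (Cs.card:ℝ)
      ≤ (M:ℝ) * (((A.card:ℝ)*(Cs.card:ℝ)) * (X/(p:ℝ))
          + Real.sqrt (((A.card:ℝ)*(Cs.card:ℝ)) * (2*X*(p:ℝ)))) := by
    have h1 : (L.card:ℝ) * c ≤ ((A.card:ℝ)*(Cs.card:ℝ)) * (X/(p:ℝ)) := by
      rw [hc, hPX]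
      exact mul_le_mul_of_nonneg_right hLle (div_nonneg hXnn hppos.le)
    have h2 : Real.sqrt ((L.card:ℝ) * (2*(P.card:ℝ)*(p:ℝ)))
        ≤ Real.sqrt (((A.card:ℝ)*(Cs.card:ℝ)) * (2*X*(p:ℝ))) := by
      apply Real.sqrt_le_sqrt
      rw [hPX]
      exact mul_le_mul_of_nonneg_right hLle
        (mul_nonneg (mul_nonneg (by norm_num) hXnn) hppos.le)
    calc (A.card:ℝ) * (B.card:ℝ) * (Cs.card:ℝ)
        ≤ (M:ℝ) * ∑ ℓ ∈ L, ((n ℓ : ℝ)) := hcountR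
      _ ≤ _ := mul_le_mul_of_nonneg_left (hIR.trans (add_le_add h1 h2)) hMpos.le
  have hac : (0:ℝ) < (A.card:ℝ)*(Cs.card:ℝ) := by positivity
  rcases le_or_gt (Real.sqrt (((A.card:ℝ)*(Cs.card:ℝ)) * (2*X*(p:ℝ))))
      (((A.card:ℝ)*(Cs.card:ℝ)) * (X/(p:ℝ))) with hcase | hcase
  · -- main term dominates
    have h1 : (A.card:ℝ)*(B.card:ℝ)*(Cs.card:ℝ)
        ≤ 2*(M:ℝ)*(((A.card:ℝ)*(Cs.card:ℝ)) * (X/(p:ℝ))) := by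
      nlinarith [hmaster, mul_nonneg hMpos.le (sub_nonneg.mpr hcase)]
    have ht2 : (p:ℝ)*(B.card:ℝ)/(M:ℝ) ≤ 8*X := by
      rw [div_le_iff₀ hMpos]
      have h3 : (A.card:ℝ)*(B.card:ℝ)*(Cs.card:ℝ)*(p:ℝ)
          ≤ 2*(M:ℝ)*((A.card:ℝ)*(Cs.card:ℝ))*X := by
        have h4 : 2*(M:ℝ)*(((A.card:ℝ)*(Cs.card:ℝ)) * (X/(p:ℝ)))*(p:ℝ)
            = 2*(M:ℝ)*((A.card:ℝ)*(Cs.card:ℝ))*X := by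
          field_simp
        calc (A.card:ℝ)*(B.card:ℝ)*(Cs.card:ℝ)*(p:ℝ)
            ≤ 2*(M:ℝ)*(((A.card:ℝ)*(Cs.card:ℝ)) * (X/(p:ℝ)))*(p:ℝ) :=
              mul_le_mul_of_nonneg_right h1 hppos.le
          _ = _ := h4
      have h5 : ((p:ℝ)*(B.card:ℝ))*((A.card:ℝ)*(Cs.card:ℝ))
          ≤ (8*X*(M:ℝ))*((A.card:ℝ)*(Cs.card:ℝ)) := by
        nlinarith [h3, mul_nonneg (mul_nonneg hMpos.le hac.le) hXnn]
      exact le_of_mul_le_mul_right h5 hac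
    have hminle := min_le_right ((A.card : ℝ) * (B.card : ℝ) ^ 2 * (Cs.card : ℝ) /
        ((p : ℝ) * ((M : ℕ) : ℝ) ^ 2)) ((p : ℝ) * (B.card : ℝ) / ((M : ℕ) : ℝ))
    linarith [hminle, ht2]
  · -- sqrt term dominates
    have h1 : (A.card:ℝ)*(B.card:ℝ)*(Cs.card:ℝ)
        ≤ 2*(M:ℝ)*Real.sqrt (((A.card:ℝ)*(Cs.card:ℝ)) * (2*X*(p:ℝ))) := by
      nlinarith [hmaster, mul_nonneg hMpos.le (sub_nonneg.mpr hcase.le)]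
    have hs1 : ((A.card:ℝ)*(B.card:ℝ)*(Cs.card:ℝ))/(2*(M:ℝ))
        ≤ Real.sqrt (((A.card:ℝ)*(Cs.card:ℝ)) * (2*X*(p:ℝ))) := by
      rw [div_le_iff₀ (by positivity)]
      linarith [h1]
    have hSnn : (0:ℝ) ≤ ((A.card:ℝ)*(Cs.card:ℝ)) * (2*X*(p:ℝ)) :=
      mul_nonneg hac.le (mul_nonneg (mul_nonneg (by norm_num) hXnn) hppos.le)
    have hsq : (((A.card:ℝ)*(B.card:ℝ)*(Cs.card:ℝ))/(2*(M:ℝ)))^2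
        ≤ ((A.card:ℝ)*(Cs.card:ℝ)) * (2*X*(p:ℝ)) := by
      have hxnn : (0:ℝ) ≤ ((A.card:ℝ)*(B.card:ℝ)*(Cs.card:ℝ))/(2*(M:ℝ)) :=
        div_nonneg (by positivity) (by linarith)
      exact (Real.le_sqrt hxnn hSnn).mp hs1
    have hsq2 : ((A.card:ℝ)*(B.card:ℝ)*(Cs.card:ℝ))^2
        ≤ ((A.card:ℝ)*(Cs.card:ℝ)) * (2*X*(p:ℝ)) * (4*(M:ℝ)^2) := by
      calc ((A.card:ℝ)*(B.card:ℝ)*(Cs.card:ℝ))^2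
          = (((A.card:ℝ)*(B.card:ℝ)*(Cs.card:ℝ))/(2*(M:ℝ)))^2 * (4*(M:ℝ)^2) := by
            field_simp
            ring
        _ ≤ _ := mul_le_mul_of_nonneg_right hsq (by positivity)
    have ht1 : (A.card:ℝ)*(B.card:ℝ)^2*(Cs.card:ℝ)/((p:ℝ)*(M:ℝ)^2) ≤ 8*X := by
      rw [div_le_iff₀ (by positivity)]
      have h6 : ((A.card:ℝ)*(B.card:ℝ)^2*(Cs.card:ℝ))*((A.card:ℝ)*(Cs.card:ℝ))
          ≤ (8*X*((p:ℝ)*(M:ℝ)^2))*((A.card:ℝ)*(Cs.card:ℝ)) := by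
        linarith [hsq2]
      exact le_of_mul_le_mul_right h6 hac
    have hminle := min_le_left ((A.card : ℝ) * (B.card : ℝ) ^ 2 * (Cs.card : ℝ) /
        ((p : ℝ) * ((M : ℕ) : ℝ) ^ 2)) ((p : ℝ) * (B.card : ℝ) / ((M : ℕ) : ℝ))
    linarith [hminle, ht1]
end

section
/- Let 𝔽_q be a finite field with q elements, q odd. For every finite subset A ⊆ 𝔽_q, writing m = |A+A| and n = |A·A|, one has |A|² ≤ mn|A|/q + q^{1/2}·√(mn). -/
open Finset Pointwise

namespace VinhAux
variable {F : Type*} [Field F] [Fintype F] [DecidableEq F]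

def lineCount (S T : Finset F) (l : F × F) : ℕ :=
  ((S ×ˢ T).filter (fun p => p.2 = l.1 * p.1 + l.2)).card

lemma lines_through (p : F × F) :
    (Finset.univ.filter (fun l : F × F => p.2 = l.1 * p.1 + l.2)).card = Fintype.card F := by
  have h : (Finset.univ.filter (fun l : F × F => p.2 = l.1 * p.1 + l.2))
      = Finset.univ.image (fun b : F => (b, p.2 - b * p.1)) := by
    ext ⟨b, c⟩
    simp only [mem_filter, mem_univ, true_and, mem_image]
    constructor
    · intro h; exact ⟨b, by rw [h]; ring_nf⟩
    · rintro ⟨b', hb⟩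
      obtain ⟨rfl, rfl⟩ : b' = b ∧ p.2 - b' * p.1 = c := Prod.mk.injEq .. ▸ hb
      ring
  rw [h, Finset.card_image_of_injective _ (fun a b hab => (Prod.mk.injEq .. ▸ hab).1),
    card_univ]

lemma lines_through_two {p p' : F × F} (h : p.1 ≠ p'.1) :
    (Finset.univ.filter (fun l : F × F =>
      p.2 = l.1 * p.1 + l.2 ∧ p'.2 = l.1 * p'.1 + l.2)).card = 1 := by
  rw [Finset.card_eq_one]
  have hd : p.1 - p'.1 ≠ 0 := sub_ne_zero.mpr h
  refine ⟨((p.2 - p'.2) / (p.1 - p'.1), p.2 - (p.2 - p'.2) / (p.1 - p'.1) * p.1), ?_⟩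
  ext ⟨b, c⟩
  simp only [mem_filter, mem_univ, true_and, mem_singleton, Prod.mk.injEq]
  constructor
  · rintro ⟨h1, h2⟩
    have hb : b = (p.2 - p'.2) / (p.1 - p'.1) := by
      field_simp
      rw [h1, h2]; ring
    refine ⟨hb, by rw [← hb, h1]; ring⟩
  · rintro ⟨rfl, rfl⟩
    constructor
    · ring
    · field_simp
      ring

lemma lines_through_two_same {p p' : F × F} (h1 : p.1 = p'.1) (h2 : p.2 ≠ p'.2) :
    (Finset.univ.filter (fun l : F × F =>
      p.2 = l.1 * p.1 + l.2 ∧ p'.2 = l.1 * p'.1 + l.2)).card = 0 := by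
  rw [Finset.card_eq_zero, Finset.filter_eq_empty_iff]
  rintro l - ⟨e1, e2⟩
  exact h2 (by rw [e1, e2, h1])

lemma sum_lineCount (S T : Finset F) :
    ∑ l : F × F, lineCount S T l = (S.card * T.card) * Fintype.card F := by
  unfold lineCount
  simp_rw [Finset.card_filter]
  rw [Finset.sum_comm]
  have : ∀ p ∈ S ×ˢ T, (∑ l : F × F, if p.2 = l.1 * p.1 + l.2 then 1 else 0)
      = Fintype.card F := by
    intro p _
    rw [← Finset.card_filter]
    exact lines_through p
  rw [Finset.sum_congr rfl this, Finset.sum_const, Finset.card_product, smul_eq_mul]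

lemma pair_count (p p' : F × F) :
    (Finset.univ.filter (fun l : F × F =>
      p.2 = l.1 * p.1 + l.2 ∧ p'.2 = l.1 * p'.1 + l.2)).card
    = if p.1 = p'.1 then (if p.2 = p'.2 then Fintype.card F else 0) else 1 := by
  by_cases h1 : p.1 = p'.1
  · by_cases h2 : p.2 = p'.2
    · have hpp : p = p' := Prod.ext h1 h2
      subst hpp
      simp only [if_pos rfl, and_self]
      exact lines_through p
    · rw [if_pos h1, if_neg h2]
      exact lines_through_two_same h1 h2
  · rw [if_neg h1]
    exact lines_through_two h1

lemma sum_lineCount_sq (S T : Finset F) :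
    ∑ l : F × F, (lineCount S T l)^2 + S.card * (T.card * T.card)
      = S.card * T.card * Fintype.card F + S.card * S.card * (T.card * T.card) := by
  have key : ∑ l : F × F, (lineCount S T l)^2
      = ∑ p ∈ S ×ˢ T, ∑ p' ∈ S ×ˢ T,
        (Finset.univ.filter (fun l : F × F =>
          p.2 = l.1 * p.1 + l.2 ∧ p'.2 = l.1 * p'.1 + l.2)).card := by
    unfold lineCount
    simp_rw [sq, Finset.card_filter]
    simp_rw [Finset.sum_mul_sum]
    simp only [ite_mul, mul_ite, one_mul, zero_mul, mul_one, mul_zero]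
    simp only [← ite_and]
    rw [Finset.sum_comm]
    refine Finset.sum_congr rfl fun p _ => ?_
    rw [Finset.sum_comm]
    exact Finset.sum_congr rfl fun p' _ => Finset.sum_congr rfl fun l _ =>
      if_congr and_comm rfl rfl
  rw [key]
  simp_rw [pair_count, Finset.sum_product]
  rw [Finset.sum_congr rfl (fun (x : F) (_ : x ∈ S) => Finset.sum_comm)]
  have hin : ∀ x x' : F,
      (∑ y ∈ T, ∑ y' ∈ T, if x = x' then (if y = y' then Fintype.card F else 0) else 1)
      = if x = x' then T.card * Fintype.card F else T.card * T.card := by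
    intro x x'
    by_cases h : x = x'
    · simp only [if_pos h]
      rw [Finset.sum_congr rfl (fun y hy => by
        rw [Finset.sum_ite_eq T y (fun _ => Fintype.card F), if_pos hy]),
        Finset.sum_const, smul_eq_mul]
    · simp only [if_neg h, Finset.sum_const, smul_eq_mul, mul_one]
  simp_rw [hin]
  have hout : ∀ x ∈ S,
      (∑ x' ∈ S, (if x = x' then T.card * Fintype.card F else T.card * T.card))
        + T.card * T.card
      = T.card * Fintype.card F + S.card * (T.card * T.card) := by
    intro x hx
    rw [← Finset.add_sum_erase S _ hx, if_pos rfl]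
    rw [Finset.sum_congr rfl (fun x' hx' =>
      if_neg (fun e => (Finset.mem_erase.1 hx').1 e.symm)),
      Finset.sum_const, smul_eq_mul, Finset.card_erase_of_mem hx]
    have h1 : 1 ≤ S.card := Finset.card_pos.mpr ⟨x, hx⟩
    obtain ⟨s', hs'⟩ := Nat.exists_eq_add_of_le h1
    rw [hs']
    simp only [Nat.add_sub_cancel_left]
    ring
  calc (∑ x ∈ S, ∑ x' ∈ S, (if x = x' then T.card * Fintype.card F else T.card * T.card))
        + S.card * (T.card * T.card)
      = ∑ x ∈ S, ((∑ x' ∈ S, (if x = x' then T.card * Fintype.card F else T.card * T.card))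
          + T.card * T.card) := by
        rw [Finset.sum_add_distrib, Finset.sum_const, smul_eq_mul]
    _ = ∑ x ∈ S, (T.card * Fintype.card F + S.card * (T.card * T.card)) :=
        Finset.sum_congr rfl hout
    _ = S.card * (T.card * Fintype.card F + S.card * (T.card * T.card)) := by
        rw [Finset.sum_const, smul_eq_mul]
    _ = S.card * T.card * Fintype.card F + S.card * S.card * (T.card * T.card) := by ring

lemma variance_identity (S T : Finset F) :
    ∑ l : F × F, ((lineCount S T l : ℝ)
        - (S.card : ℝ) * T.card / Fintype.card F)^2
      = (S.card : ℝ) * T.card * ((Fintype.card F : ℝ) - T.card) := by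
  have hq : (0:ℝ) < (Fintype.card F : ℝ) := by
    exact_mod_cast Fintype.card_pos
  set q : ℝ := (Fintype.card F : ℝ) with hqdef
  set s : ℝ := (S.card : ℝ)
  set t : ℝ := (T.card : ℝ)
  have h1 : ∑ l : F × F, (lineCount S T l : ℝ) = s * t * q := by
    have := sum_lineCount S T
    have := congrArg (Nat.cast (R := ℝ)) this
    push_cast at this
    simpa using this
  have h2 : (∑ l : F × F, (lineCount S T l : ℝ)^2) + s * (t * t)
      = s * t * q + s * s * (t * t) := by
    have := sum_lineCount_sq S T
    have := congrArg (Nat.cast (R := ℝ)) this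
    push_cast at this
    simpa using this
  have hcard : ((Finset.univ : Finset (F × F)).card : ℝ) = q * q := by
    rw [Finset.card_univ, Fintype.card_prod]
    push_cast
    ring
  have expand : ∑ l : F × F, ((lineCount S T l : ℝ) - s * t / q)^2
      = (∑ l : F × F, (lineCount S T l : ℝ)^2)
        - 2 * (s * t / q) * (∑ l : F × F, (lineCount S T l : ℝ))
        + ((Finset.univ : Finset (F × F)).card : ℝ) * (s * t / q)^2 := by
    simp_rw [sub_sq]
    have hswap : ∀ x : F × F, 2 * (lineCount S T x : ℝ) * (s * t / q)
        = (2 * (s * t / q)) * (lineCount S T x : ℝ) := fun x => by ring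
    simp_rw [hswap]
    rw [Finset.sum_add_distrib, Finset.sum_sub_distrib, ← Finset.mul_sum,
      Finset.sum_const, nsmul_eq_mul]
  rw [expand, h1, hcard]
  have h2' : (∑ l : F × F, (lineCount S T l : ℝ)^2)
      = s * t * q + s * s * (t * t) - s * (t * t) := by linarith
  rw [h2']
  field_simp
  ring

lemma incidence_bound (S T : Finset F) (L : Finset (F × F)) :
    (∑ l ∈ L, (lineCount S T l : ℝ))
      ≤ (L.card : ℝ) * ((S.card : ℝ) * T.card) / Fintype.card F
        + Real.sqrt ((L.card : ℝ)
            * ((S.card : ℝ) * T.card * ((Fintype.card F : ℝ) - T.card))) := by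
  set q : ℝ := (Fintype.card F : ℝ)
  set c : ℝ := (S.card : ℝ) * T.card / q with hc
  have key : ∑ l ∈ L, ((lineCount S T l : ℝ) - c)
      ≤ Real.sqrt ((L.card : ℝ)
          * ((S.card : ℝ) * T.card * (q - T.card))) := by
    have h1 : (∑ l ∈ L, ((lineCount S T l : ℝ) - c))^2
        ≤ (L.card : ℝ) * ∑ l ∈ L, ((lineCount S T l : ℝ) - c)^2 :=
      sq_sum_le_card_mul_sum_sq
    have h2 : ∑ l ∈ L, ((lineCount S T l : ℝ) - c)^2
        ≤ ∑ l : F × F, ((lineCount S T l : ℝ) - c)^2 :=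
      Finset.sum_le_sum_of_subset_of_nonneg (Finset.subset_univ L)
        (fun _ _ _ => sq_nonneg _)
    have h3 : (∑ l ∈ L, ((lineCount S T l : ℝ) - c))^2
        ≤ (L.card : ℝ) * ((S.card : ℝ) * T.card * (q - T.card)) := by
      calc (∑ l ∈ L, ((lineCount S T l : ℝ) - c))^2
          ≤ (L.card : ℝ) * ∑ l ∈ L, ((lineCount S T l : ℝ) - c)^2 := h1
        _ ≤ (L.card : ℝ) * ∑ l : F × F, ((lineCount S T l : ℝ) - c)^2 := by
            apply mul_le_mul_of_nonneg_left h2 (by positivity)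
        _ = (L.card : ℝ) * ((S.card : ℝ) * T.card * (q - T.card)) := by
            rw [variance_identity]
    calc ∑ l ∈ L, ((lineCount S T l : ℝ) - c)
        ≤ |∑ l ∈ L, ((lineCount S T l : ℝ) - c)| := le_abs_self _
      _ = Real.sqrt ((∑ l ∈ L, ((lineCount S T l : ℝ) - c))^2) :=
          (Real.sqrt_sq_eq_abs _).symm
      _ ≤ _ := Real.sqrt_le_sqrt h3
  have hsum : ∑ l ∈ L, (lineCount S T l : ℝ)
      = (∑ l ∈ L, ((lineCount S T l : ℝ) - c)) + (L.card : ℝ) * c := by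
    rw [Finset.sum_sub_distrib, Finset.sum_const, nsmul_eq_mul]
    ring
  rw [hsum, hc]
  have : (L.card : ℝ) * ((S.card : ℝ) * T.card / q)
      = (L.card : ℝ) * ((S.card : ℝ) * T.card) / q := by ring
  linarith [key]

lemma key_bound (A B : Finset F) (hBA : B ⊆ A) (h0 : (0:F) ∉ B) :
    (A.card : ℝ) * ((A.card : ℝ) * B.card)
      ≤ (A.card : ℝ) * B.card * (((A+A).card : ℝ) * ((A*A).card : ℝ)) / Fintype.card F
        + Real.sqrt ((A.card : ℝ) * B.card *
            (((A+A).card : ℝ) * ((A*A).card : ℝ)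
              * ((Fintype.card F : ℝ) - ((A*A).card : ℝ)))) := by
  classical
  set φ : F × F → F × F := fun ab => (ab.2, -(ab.1 * ab.2)) with hφ
  set L : Finset (F × F) := (A ×ˢ B).image φ with hL
  have hinj : Set.InjOn φ (A ×ˢ B : Finset (F × F)) := by
    rintro ⟨a, b⟩ hab ⟨a', b'⟩ hab' heq
    simp only [Finset.coe_product, Set.mem_prod, Finset.mem_coe] at hab hab'
    have hb : b = b' := (Prod.mk.injEq .. ▸ heq).1
    have hab2 : -(a * b) = -(a' * b') := (Prod.mk.injEq .. ▸ heq).2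
    have hbne : b ≠ 0 := fun h => h0 (h ▸ hab.2)
    subst hb
    have : a * b = a' * b := by linear_combination -hab2
    exact Prod.ext (mul_right_cancel₀ hbne this) rfl
  have hLcard : L.card = A.card * B.card := by
    rw [hL, Finset.card_image_of_injOn hinj, Finset.card_product]
  have hN : ∀ l ∈ L, A.card ≤ lineCount (A + A) (A * A) l := by
    intro l hl
    rw [hL, Finset.mem_image] at hl
    obtain ⟨⟨a, b⟩, hab, rfl⟩ := hl
    rw [Finset.mem_product] at hab
    unfold lineCount
    apply Finset.card_le_card_of_injOn (fun c => (a + c, b * c))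
    · intro c hc
      rw [Finset.mem_coe, Finset.mem_filter, Finset.mem_product]
      refine ⟨⟨Finset.add_mem_add hab.1 hc, Finset.mul_mem_mul (hBA hab.2) hc⟩, ?_⟩
      show b * c = b * (a + c) + -(a * b)
      ring
    · intro c _ c' _ h
      have := (Prod.mk.injEq .. ▸ h).1
      exact add_left_cancel this
  have hsum : (A.card : ℝ) * ((A.card : ℝ) * B.card)
      ≤ ∑ l ∈ L, (lineCount (A + A) (A * A) l : ℝ) := by
    calc (A.card : ℝ) * ((A.card : ℝ) * B.card)
        = ∑ _l ∈ L, (A.card : ℝ) := by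
          rw [Finset.sum_const, nsmul_eq_mul, hLcard]
          push_cast
          ring
      _ ≤ ∑ l ∈ L, (lineCount (A + A) (A * A) l : ℝ) :=
          Finset.sum_le_sum (fun l hl => by exact_mod_cast hN l hl)
  have hcast : (L.card : ℝ) = (A.card : ℝ) * B.card := by
    rw [hLcard]; push_cast; ring
  have := incidence_bound (A + A) (A * A) L
  rw [hcast] at this
  exact hsum.trans this

end VinhAux

set_option maxHeartbeats 1600000 in
theorem vinh_sum_product (F : Type*) [Field F] [Fintype F] [DecidableEq F]
    (hodd : Odd (Fintype.card F)) (A : Finset F) :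
    ((A.card : ℝ)) ^ 2 ≤
      ((A + A).card : ℝ) * ((A * A).card : ℝ) * (A.card : ℝ) / (Fintype.card F : ℝ) +
        Real.sqrt (Fintype.card F) *
          Real.sqrt (((A + A).card : ℝ) * ((A * A).card : ℝ)) := by
  classical
  have hqpos : (0:ℝ) < (Fintype.card F : ℝ) := by exact_mod_cast Fintype.card_pos
  have hq1 : (1:ℝ) ≤ (Fintype.card F : ℝ) := by exact_mod_cast Fintype.card_pos
  rcases Finset.eq_empty_or_nonempty A with rfl | hA
  · have h1 : (∅ : Finset F) + ∅ = ∅ := by simp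
    have h2 : (∅ : Finset F) * ∅ = ∅ := by simp
    rw [h1, h2]
    simp
  set q : ℝ := (Fintype.card F : ℝ) with hqdef
  set k : ℝ := (A.card : ℝ) with hkdef
  set m : ℝ := ((A + A).card : ℝ) with hmdef
  set n : ℝ := ((A * A).card : ℝ) with hndef
  have hk0 : 0 ≤ k := Nat.cast_nonneg _
  have hm0 : 0 ≤ m := Nat.cast_nonneg _
  have hn0 : 0 ≤ n := Nat.cast_nonneg _
  have hnq : n ≤ q := by
    rw [hndef, hqdef]; exact_mod_cast Finset.card_le_univ (A * A)
  obtain ⟨a₀, ha₀⟩ := hA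
  have hk1 : (1:ℝ) ≤ k := by
    have : 1 ≤ A.card := Finset.card_pos.mpr ⟨a₀, ha₀⟩
    rw [hkdef]; exact_mod_cast this
  by_cases hex : ∃ b ∈ A, b ≠ 0
  · obtain ⟨b₀, hb₀A, hb₀⟩ := hex
    -- m ≥ k and n ≥ k
    have hmk : k ≤ m := by
      have : A.card ≤ (A + A).card := by
        apply Finset.card_le_card_of_injOn (fun x => x + a₀)
        · intro x hx; exact Finset.add_mem_add hx ha₀
        · intro x _ y _ h; exact add_right_cancel h
      rw [hkdef, hmdef]; exact_mod_cast this
    have hnk : k ≤ n := by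
      have : A.card ≤ (A * A).card := by
        apply Finset.card_le_card_of_injOn (fun x => b₀ * x)
        · intro x hx; exact Finset.mul_mem_mul hb₀A hx
        · intro x _ y _ h; exact mul_left_cancel₀ hb₀ h
      rw [hkdef, hndef]; exact_mod_cast this
    rcases le_or_gt k (Real.sqrt q) with hcheap | hbig
    · -- cheap case: k ≤ √q
      have h1 : k ≤ Real.sqrt (m * n) := by
        nlinarith [Real.sq_sqrt (mul_nonneg hm0 hn0), Real.sqrt_nonneg (m * n), hmk, hnk]
      have h2 : k ^ 2 ≤ Real.sqrt q * Real.sqrt (m * n) := by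
        have := mul_le_mul hcheap h1 hk0 (Real.sqrt_nonneg q)
        nlinarith
      have h3 : 0 ≤ m * n * k / q := by positivity
      linarith
    · -- big case: √q < k, so q < k^2
      have hqk2 : q < k ^ 2 := by
        have := Real.sqrt_lt' (by linarith : (0:ℝ) < k) |>.mp hbig
        linarith [this]
      have hsqrtq : Real.sqrt (q * (m * n)) = Real.sqrt q * Real.sqrt (m * n) :=
        Real.sqrt_mul hqpos.le _
      by_cases h0A : (0:F) ∈ A
      · -- use B = A.erase 0
        have h2k : 2 ≤ A.card := by
          apply Finset.one_lt_card.mpr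
          exact ⟨0, h0A, b₀, hb₀A, fun h => hb₀ h.symm⟩
        set B := A.erase 0 with hB
        have hBA : B ⊆ A := Finset.erase_subset _ _
        have h0B : (0:F) ∉ B := Finset.notMem_erase _ _
        have hBcard : (B.card : ℝ) = k - 1 := by
          rw [hB, Finset.card_erase_of_mem h0A]
          have : 1 ≤ A.card := by omega
          push_cast [Nat.cast_sub this]
          ring
        have G := VinhAux.key_bound A B hBA h0B
        rw [hBcard] at G
        -- G : k * (k * (k-1)) ≤ k*(k-1)*(m*n)/q + √(k*(k-1)*(m*n*(q-n)))
        have hk2 : (2:ℝ) ≤ k := by rw [hkdef]; exact_mod_cast h2k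
        have hqkn : q ≤ k * n := by nlinarith
        have hsq : Real.sqrt (k * (k - 1) * (m * n * (q - n)))
            ≤ (k - 1) * Real.sqrt (q * (m * n)) := by
          have hb : k * (k - 1) * (m * n * (q - n)) ≤ (k - 1)^2 * (q * (m * n)) := by
            nlinarith [mul_nonneg (mul_nonneg (by linarith : (0:ℝ) ≤ k - 1)
              (mul_nonneg hm0 hn0)) (by linarith : (0:ℝ) ≤ k * n - q)]
          calc Real.sqrt (k * (k - 1) * (m * n * (q - n)))
              ≤ Real.sqrt ((k - 1)^2 * (q * (m * n))) := Real.sqrt_le_sqrt hb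
            _ = (k - 1) * Real.sqrt (q * (m * n)) := by
                rw [Real.sqrt_mul (sq_nonneg _), Real.sqrt_sq (by linarith : (0:ℝ) ≤ k - 1)]
        have G2 : k * (k * (k - 1))
            ≤ k * (k - 1) * (m * n) / q + (k - 1) * (Real.sqrt q * Real.sqrt (m * n)) := by
          calc k * (k * (k - 1)) ≤ k * (k - 1) * (m * n) / q
                + Real.sqrt (k * (k - 1) * (m * n * (q - n))) := G
            _ ≤ k * (k - 1) * (m * n) / q + (k - 1) * Real.sqrt (q * (m * n)) := by
                linarith [hsq]
            _ = _ := by rw [hsqrtq]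
        have hk1pos : (0:ℝ) < k - 1 := by linarith
        have e1 : k * (k * (k - 1)) = (k - 1) * k ^ 2 := by ring
        have e2 : k * (k - 1) * (m * n) / q + (k - 1) * (Real.sqrt q * Real.sqrt (m * n))
            = (k - 1) * (m * n * k / q + Real.sqrt q * Real.sqrt (m * n)) := by ring
        rw [e1, e2] at G2
        exact (mul_le_mul_iff_right₀ hk1pos).mp G2
      · -- 0 ∉ A: use B = A
        have G := VinhAux.key_bound A A (Finset.Subset.refl A) h0A
        have hsq : Real.sqrt (k * k * (m * n * (q - n)))
            ≤ k * Real.sqrt (q * (m * n)) := by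
          have hb : k * k * (m * n * (q - n)) ≤ k^2 * (q * (m * n)) := by
            nlinarith [mul_nonneg (mul_nonneg (mul_nonneg hk0 hk0)
              (mul_nonneg hm0 hn0)) hn0]
          calc Real.sqrt (k * k * (m * n * (q - n)))
              ≤ Real.sqrt (k^2 * (q * (m * n))) := Real.sqrt_le_sqrt hb
            _ = k * Real.sqrt (q * (m * n)) := by
                rw [Real.sqrt_mul (sq_nonneg _), Real.sqrt_sq hk0]
        have G2 : k * (k * k)
            ≤ k * k * (m * n) / q + k * (Real.sqrt q * Real.sqrt (m * n)) := by
          calc k * (k * k) ≤ k * k * (m * n) / q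
                + Real.sqrt (k * k * (m * n * (q - n))) := G
            _ ≤ k * k * (m * n) / q + k * Real.sqrt (q * (m * n)) := by linarith [hsq]
            _ = _ := by rw [hsqrtq]
        have hkpos : (0:ℝ) < k := by linarith
        have e1 : k * (k * k) = k * k ^ 2 := by ring
        have e2 : k * k * (m * n) / q + k * (Real.sqrt q * Real.sqrt (m * n))
            = k * (m * n * k / q + Real.sqrt q * Real.sqrt (m * n)) := by ring
        rw [e1, e2] at G2
        exact (mul_le_mul_iff_right₀ hkpos).mp G2
  · -- A = {0}
    push_neg at hex
    have hA0 : A = {0} := by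
      apply Finset.eq_singleton_iff_unique_mem.mpr
      exact ⟨by rwa [← hex a₀ ha₀], fun x hx => hex x hx⟩
    subst hA0
    have hm1 : m = 1 := by
      have e : ({0} : Finset F) + {0} = {0} := by
        rw [Finset.singleton_add_singleton, add_zero]
      rw [hmdef, e, Finset.card_singleton, Nat.cast_one]
    have hn1 : n = 1 := by
      have e : ({0} : Finset F) * {0} = {0} := by
        rw [Finset.singleton_mul_singleton, mul_zero]
      rw [hndef, e, Finset.card_singleton, Nat.cast_one]
    have hk1' : k = 1 := by rw [hkdef]; norm_num
    rw [hm1, hn1, hk1']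
    have e : Real.sqrt ((1:ℝ) * 1) = 1 := by
      norm_num [Real.sqrt_one]
    rw [e]
    have hs : (1:ℝ) ≤ Real.sqrt q := by
      rw [show (1:ℝ) = Real.sqrt 1 by simp]
      exact Real.sqrt_le_sqrt hq1
    have hpos : (0:ℝ) < 1 * 1 * 1 / q := by positivity
    nlinarith
end

section
/- There exists an absolute constant C > 0 such that the following holds. Let 𝔽_q be a finite field with q elements, q odd. For every finite subset A ⊆ 𝔽_q, writing m = |A+A| and n = |A·A|, one has |A|³ ≤ C · ( m²n|A|/q + q^{1/2}·mn ). -/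
open Finset Pointwise

section HISaux

variable {F : Type} [Field F] [Fintype F] [DecidableEq F]

/-- number of points of `P` on the line `y = a*x + b` -/
def HISlc (P : Finset (F × F)) (a b : F) : ℕ :=
  (P.filter fun p => p.2 = a * p.1 + b).card

lemma HISlc_eq_sum (P : Finset (F × F)) (a b : F) :
    HISlc P a b = ∑ p ∈ P, if p.2 = a * p.1 + b then 1 else 0 :=
  Finset.card_filter _ _

lemma HIS_sum_lc (P : Finset (F × F)) (a : F) :
    ∑ b : F, HISlc P a b = P.card := by
  simp only [HISlc_eq_sum]
  rw [Finset.sum_comm, Finset.card_eq_sum_ones P]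
  refine Finset.sum_congr rfl fun p _ => ?_
  have h : ∀ b : F, (p.2 = a * p.1 + b) ↔ (b = p.2 - a * p.1) := fun b =>
    ⟨fun h => by rw [h]; ring, fun h => by rw [h]; ring⟩
  simp only [h]
  rw [Finset.sum_ite_eq' Finset.univ (p.2 - a * p.1) fun _ => (1:ℕ)]
  simp

/-- pairs `(a,b)` such that both `p` and `p'` lie on `y = a*x + b` -/
def HIScpl (p p' : F × F) : Finset (F × F) :=
  Finset.univ.filter fun ab => p.2 = ab.1 * p.1 + ab.2 ∧ p'.2 = ab.1 * p'.1 + ab.2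

lemma HIScpl_card (p p' : F × F) :
    (HIScpl p p').card ≤ if p' = p then Fintype.card F else 1 := by
  split_ifs with h
  · calc (HIScpl p p').card ≤ (Finset.univ : Finset F).card := by
          apply Finset.card_le_card_of_injOn (fun ab => ab.1) (fun ab _ => Finset.mem_univ _)
          intro x hx y hy hxy
          have hxy' : x.1 = y.1 := hxy
          simp only [HIScpl, Finset.mem_coe, Finset.mem_filter, Finset.mem_univ, true_and] at hx hy
          have h5 := hx.1.symm.trans hy.1
          rw [hxy'] at h5
          exact Prod.ext hxy' (add_left_cancel h5)
    _ = Fintype.card F := Finset.card_univ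
  · rw [Finset.card_le_one]
    intro x hx y hy
    simp only [HIScpl, Finset.mem_filter, Finset.mem_univ, true_and] at hx hy
    obtain ⟨hx1, hx2⟩ := hx
    obtain ⟨hy1, hy2⟩ := hy
    by_cases hp : p.1 = p'.1
    · exfalso
      apply h
      refine Prod.ext hp.symm ?_
      rw [hx2, hp.symm, ← hx1]
    · have ha : x.1 = y.1 := by
        have h3 : (x.1 - y.1) * (p.1 - p'.1) = 0 := by
          linear_combination hy1 - hx1 + hx2 - hy2
        rcases mul_eq_zero.mp h3 with h4 | h4
        · exact sub_eq_zero.mp h4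
        · exact absurd (sub_eq_zero.mp h4) hp
      have h5 := hx1.symm.trans hy1
      rw [ha] at h5
      exact Prod.ext ha (add_left_cancel h5)

lemma HIS_sum_lc_sq (P : Finset (F × F)) :
    ∑ ab : F × F, HISlc P ab.1 ab.2 ^ 2 ≤ P.card * Fintype.card F + P.card * P.card := by
  have key : ∑ ab : F × F, HISlc P ab.1 ab.2 ^ 2 = ∑ p ∈ P, ∑ p' ∈ P, (HIScpl p p').card := by
    simp only [HISlc_eq_sum, sq, Finset.sum_mul_sum]
    rw [Finset.sum_comm]
    refine Finset.sum_congr rfl fun p _ => ?_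
    rw [Finset.sum_comm]
    refine Finset.sum_congr rfl fun p' _ => ?_
    rw [HIScpl, Finset.card_filter]
    refine Finset.sum_congr rfl fun ab _ => ?_
    by_cases h1 : p.2 = ab.1 * p.1 + ab.2 <;> by_cases h2 : p'.2 = ab.1 * p'.1 + ab.2 <;>
      simp [h1, h2]
  rw [key]
  calc ∑ p ∈ P, ∑ p' ∈ P, (HIScpl p p').card
      ≤ ∑ p ∈ P, ∑ p' ∈ P, ((if p' = p then Fintype.card F else 0) + 1) := by
        refine Finset.sum_le_sum fun p _ => Finset.sum_le_sum fun p' _ => ?_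
        refine le_trans (HIScpl_card p p') ?_
        split_ifs <;> simp
    _ = ∑ p ∈ P, (Fintype.card F + P.card) := by
        refine Finset.sum_congr rfl fun p hp => ?_
        rw [Finset.sum_add_distrib, Finset.sum_ite_eq' P p fun _ => Fintype.card F, if_pos hp]
        simp
    _ = P.card * Fintype.card F + P.card * P.card := by
        rw [Finset.sum_const, smul_eq_mul, mul_add]

lemma HIS_lc_lower (A : Finset F) {a b : F} (ha : a ∈ A) (ha0 : a ≠ 0) (hb : b ∈ A) :
    A.card ≤ HISlc ((A + A) ×ˢ (A * A)) a (-(a * b)) := by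
  apply Finset.card_le_card_of_injOn (fun c => (b + c, a * c))
  · intro c hc
    simp only [HISlc, Finset.mem_coe, Finset.mem_filter, Finset.mem_product]
    refine ⟨⟨Finset.add_mem_add hb hc, Finset.mul_mem_mul ha hc⟩, by ring⟩
  · intro c _ c' _ h
    have h1 : b + c = b + c' := congrArg Prod.fst h
    exact add_left_cancel h1

lemma HIS_main_count (A : Finset F) :
    ((A.erase 0).card * A.card) * A.card ≤
      ∑ t ∈ ((A.erase 0) ×ˢ A).image (fun x : F × F => (x.1, -(x.1 * x.2))),
        HISlc ((A + A) ×ˢ (A * A)) t.1 t.2 := by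
  set T : Finset (F × F) := ((A.erase 0) ×ˢ A).image (fun x : F × F => (x.1, -(x.1 * x.2)))
    with hT
  have hinj : Set.InjOn (fun x : F × F => (x.1, -(x.1 * x.2)))
      (((A.erase 0) ×ˢ A : Finset (F × F)) : Set (F × F)) := by
    intro x hx y hy hxy
    rw [Finset.mem_coe, Finset.mem_product, Finset.mem_erase] at hx hy
    have hxy' : (x.1, -(x.1 * x.2)) = (y.1, -(y.1 * y.2)) := hxy
    injection hxy' with h1 h2
    rw [h1] at h2
    have h3 : x.2 = y.2 := mul_left_cancel₀ hy.1.1 (neg_injective h2)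
    exact Prod.ext h1 h3
  have hcard : T.card = (A.erase 0).card * A.card := by
    rw [hT, Finset.card_image_of_injOn hinj, Finset.card_product]
  have hbound : ∀ t ∈ T, A.card ≤ HISlc ((A + A) ×ˢ (A * A)) t.1 t.2 := by
    intro t ht
    rw [hT, Finset.mem_image] at ht
    obtain ⟨x, hx, rfl⟩ := ht
    rw [Finset.mem_product, Finset.mem_erase] at hx
    exact HIS_lc_lower A hx.1.2 hx.1.1 hx.2
  calc ((A.erase 0).card * A.card) * A.card = T.card * A.card := by rw [hcard]
    _ = T.card • A.card := by rw [smul_eq_mul]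
    _ ≤ ∑ t ∈ T, HISlc ((A + A) ×ˢ (A * A)) t.1 t.2 := Finset.card_nsmul_le_sum T _ _ hbound

end HISaux

set_option maxHeartbeats 2000000 in
theorem hart_iosevich_solymosi_sum_product :
    ∃ C > (0:ℝ),
      ∀ (F : Type) [Field F] [Fintype F] [DecidableEq F],
      Odd (Fintype.card F) →
      ∀ A : Finset F,
      ((A.card : ℝ)) ^ 3 ≤
        C * (((A + A).card : ℝ) ^ 2 * ((A * A).card : ℝ) * (A.card : ℝ) / (Fintype.card F : ℝ) +
          Real.sqrt (Fintype.card F) * ((A + A).card : ℝ) * ((A * A).card : ℝ)) := by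
  refine ⟨4, by norm_num, ?_⟩
  intro F _ _ _ _ A
  by_cases hA : A.Nonempty
  swap
  · rw [Finset.not_nonempty_iff_eq_empty] at hA
    subst hA
    simp
  obtain ⟨a₀, ha₀⟩ := hA
  have hq1 : (1:ℝ) ≤ (Fintype.card F : ℝ) := by
    have : (1:ℕ) ≤ Fintype.card F := Fintype.card_pos
    exact_mod_cast this
  have hq0 : (0:ℝ) < (Fintype.card F : ℝ) := lt_of_lt_of_le one_pos hq1
  set q : ℝ := (Fintype.card F : ℝ) with hqdef
  set m : ℝ := ((A + A).card : ℝ) with hmdef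
  set n : ℝ := ((A * A).card : ℝ) with hndef
  set α : ℝ := (A.card : ℝ) with hadef
  have hα1 : (1:ℝ) ≤ α := by
    rw [hadef]
    have : (1:ℕ) ≤ A.card := Finset.card_pos.mpr ⟨a₀, ha₀⟩
    exact_mod_cast this
  have hα0 : (0:ℝ) ≤ α := le_trans zero_le_one hα1
  -- α ≤ m
  have hmN : A.card ≤ (A + A).card := by
    apply Finset.card_le_card_of_injOn (fun x => a₀ + x)
    · intro x hx
      exact Finset.add_mem_add ha₀ hx
    · intro x _ y _ h
      exact add_left_cancel h
  have hm : α ≤ m := by rw [hadef, hmdef]; exact_mod_cast hmN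
  have hm0 : (0:ℝ) ≤ m := le_trans hα0 hm
  -- α ≤ n
  have hnN : A.card ≤ (A * A).card := by
    by_cases h0 : ∃ a ∈ A, a ≠ 0
    · obtain ⟨a₁, ha₁, ha₁0⟩ := h0
      apply Finset.card_le_card_of_injOn (fun x => a₁ * x)
      · intro x hx
        exact Finset.mul_mem_mul ha₁ hx
      · intro x _ y _ h
        exact mul_left_cancel₀ ha₁0 h
    · push_neg at h0
      have hA0 : A = {0} := by
        apply Finset.eq_singleton_iff_unique_mem.mpr
        exact ⟨by rw [← h0 a₀ ha₀]; exact ha₀, fun x hx => h0 x hx⟩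
      rw [hA0]
      simp [Finset.singleton_mul_singleton]
  have hn : α ≤ n := by rw [hadef, hndef]; exact_mod_cast hnN
  have hn0 : (0:ℝ) ≤ n := le_trans hα0 hn
  set P : Finset (F × F) := (A + A) ×ˢ (A * A) with hPdef
  have hPcard : (P.card : ℝ) = m * n := by
    rw [hPdef, Finset.card_product, hmdef, hndef]
    push_cast
    ring
  set T : Finset (F × F) := ((A.erase 0) ×ˢ A).image (fun x : F × F => (x.1, -(x.1 * x.2)))
    with hTdef
  have hTcard : (T.card : ℝ) ≤ α * α := by
    have h1 : T.card ≤ (A.erase 0).card * A.card :=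
      le_trans Finset.card_image_le (le_of_eq (Finset.card_product _ _))
    have h2 : (A.erase 0).card ≤ A.card := Finset.card_erase_le
    have h3 : T.card ≤ A.card * A.card := le_trans h1 (Nat.mul_le_mul_right _ h2)
    rw [hadef]
    exact_mod_cast h3
  have hTcard0 : (0:ℝ) ≤ (T.card : ℝ) := Nat.cast_nonneg _
  -- first moment
  have hsum1 : ∑ ab : F × F, (HISlc P ab.1 ab.2 : ℝ) = q * (m * n) := by
    rw [Fintype.sum_prod_type]
    have h1 : ∀ a : F, ∑ b : F, (HISlc P a b : ℝ) = m * n := by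
      intro a
      rw [← Nat.cast_sum, HIS_sum_lc P a, hPcard]
    rw [Finset.sum_congr rfl fun a _ => h1 a, Finset.sum_const, Finset.card_univ,
      nsmul_eq_mul]
  -- second moment
  have hsum2 : ∑ ab : F × F, (HISlc P ab.1 ab.2 : ℝ)^2 ≤ m * n * q + (m * n)^2 := by
    have h1 := HIS_sum_lc_sq P
    have h2 : (∑ ab : F × F, HISlc P ab.1 ab.2 ^ 2 : ℝ)
        = ∑ ab : F × F, (HISlc P ab.1 ab.2 : ℝ)^2 := by push_cast; rfl
    have h3 : ((P.card * Fintype.card F + P.card * P.card : ℕ) : ℝ) = m * n * q + (m*n)^2 := by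
      push_cast
      rw [hPcard]
      ring
    calc ∑ ab : F × F, (HISlc P ab.1 ab.2 : ℝ)^2
        = ((∑ ab : F × F, HISlc P ab.1 ab.2 ^ 2 : ℕ) : ℝ) := by rw [← h2]; push_cast; ring
      _ ≤ ((P.card * Fintype.card F + P.card * P.card : ℕ) : ℝ) := by exact_mod_cast h1
      _ = m * n * q + (m*n)^2 := h3
  -- variance
  set c : ℝ := m * n / q with hcdef
  have hc0 : (0:ℝ) ≤ c := div_nonneg (mul_nonneg hm0 hn0) hq0.le
  have hvar : ∑ ab : F × F, ((HISlc P ab.1 ab.2 : ℝ) - c)^2 ≤ m * n * q := by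
    have expand : ∑ ab : F × F, ((HISlc P ab.1 ab.2 : ℝ) - c)^2
        = (∑ ab : F × F, (HISlc P ab.1 ab.2 : ℝ)^2)
          - 2 * c * (∑ ab : F × F, (HISlc P ab.1 ab.2 : ℝ)) + (q * q) * c^2 := by
      simp only [sub_sq]
      rw [Finset.sum_add_distrib, Finset.sum_sub_distrib, Finset.sum_const, Finset.card_univ,
        Fintype.card_prod, ← Finset.sum_mul, ← Finset.mul_sum]
      push_cast
      ring
    rw [expand, hsum1]
    have e1 : 2 * c * (q * (m * n)) = 2 * (m*n)^2 := by
      rw [hcdef]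
      field_simp
    have e2 : (q * q) * c^2 = (m*n)^2 := by
      rw [hcdef]
      field_simp
    rw [e1, e2]
    linarith [hsum2]
  -- Cauchy-Schwarz
  have hCS : (∑ t ∈ T, ((HISlc P t.1 t.2 : ℝ) - c))^2 ≤ (α * α) * (m * n * q) := by
    have h1 := Finset.sum_mul_sq_le_sq_mul_sq T (fun _ => (1:ℝ))
      (fun t => (HISlc P t.1 t.2 : ℝ) - c)
    simp only [one_mul, one_pow] at h1
    have h2 : ∑ t ∈ T, (1:ℝ) = (T.card : ℝ) := by simp
    rw [h2] at h1
    have h3 : ∑ t ∈ T, ((HISlc P t.1 t.2 : ℝ) - c)^2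
        ≤ ∑ ab : F × F, ((HISlc P ab.1 ab.2 : ℝ) - c)^2 :=
      Finset.sum_le_sum_of_subset_of_nonneg (Finset.subset_univ T)
        (fun _ _ _ => sq_nonneg _)
    calc (∑ t ∈ T, ((HISlc P t.1 t.2 : ℝ) - c))^2
        ≤ (T.card : ℝ) * ∑ t ∈ T, ((HISlc P t.1 t.2 : ℝ) - c)^2 := h1
      _ ≤ (α * α) * (m * n * q) := by
          apply mul_le_mul hTcard (le_trans h3 hvar)
            (Finset.sum_nonneg fun t _ => sq_nonneg _) (mul_nonneg hα0 hα0)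
  -- lower bound on the incidence sum
  have hlow : (α - 1) * α * α ≤ ∑ t ∈ T, (HISlc P t.1 t.2 : ℝ) := by
    have h1 := HIS_main_count A
    have h2 : (α - 1) ≤ ((A.erase 0).card : ℝ) := by
      have h3 : A.card - 1 ≤ (A.erase 0).card := Finset.pred_card_le_card_erase
      have h4 : (1:ℕ) ≤ A.card := Finset.card_pos.mpr ⟨a₀, ha₀⟩
      have h5 : ((A.card - 1 : ℕ) : ℝ) ≤ ((A.erase 0).card : ℝ) := by exact_mod_cast h3
      rwa [Nat.cast_sub h4, Nat.cast_one] at h5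
    have h6 : (((A.erase 0).card * A.card) * A.card : ℝ)
        ≤ ∑ t ∈ T, (HISlc P t.1 t.2 : ℝ) := by
      rw [← Nat.cast_sum]
      exact_mod_cast h1
    calc (α - 1) * α * α ≤ ((A.erase 0).card : ℝ) * α * α := by
          apply mul_le_mul_of_nonneg_right (mul_le_mul_of_nonneg_right h2 hα0) hα0
      _ ≤ ∑ t ∈ T, (HISlc P t.1 t.2 : ℝ) := h6
  -- upper bound on the incidence sum
  have hup : ∑ t ∈ T, (HISlc P t.1 t.2 : ℝ) ≤ α * α * (m * n) / q + Real.sqrt q * (m * n) := by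
    have hsplit : ∑ t ∈ T, (HISlc P t.1 t.2 : ℝ)
        = (∑ t ∈ T, ((HISlc P t.1 t.2 : ℝ) - c)) + (T.card : ℝ) * c := by
      rw [Finset.sum_sub_distrib, Finset.sum_const, nsmul_eq_mul]
      ring
    have hdev : ∑ t ∈ T, ((HISlc P t.1 t.2 : ℝ) - c) ≤ Real.sqrt q * (m * n) := by
      have h1 : ∑ t ∈ T, ((HISlc P t.1 t.2 : ℝ) - c)
          ≤ Real.sqrt ((∑ t ∈ T, ((HISlc P t.1 t.2 : ℝ) - c))^2) := by
        rw [Real.sqrt_sq_eq_abs]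
        exact le_abs_self _
      have h2 : Real.sqrt ((∑ t ∈ T, ((HISlc P t.1 t.2 : ℝ) - c))^2)
          ≤ Real.sqrt ((α * α) * (m * n * q)) := Real.sqrt_le_sqrt hCS
      have hαmn : α * α ≤ m * n := mul_le_mul hm hn hα0 hm0
      have h3 : Real.sqrt ((α * α) * (m * n * q)) ≤ Real.sqrt ((m * n) * (m * n * q)) := by
        apply Real.sqrt_le_sqrt
        exact mul_le_mul_of_nonneg_right hαmn (mul_nonneg (mul_nonneg hm0 hn0) hq0.le)
      have h4 : Real.sqrt ((m * n) * (m * n * q)) = Real.sqrt q * (m * n) := by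
        rw [show (m * n) * (m * n * q) = (m*n)^2 * q by ring, Real.sqrt_mul (sq_nonneg _),
          Real.sqrt_sq (mul_nonneg hm0 hn0)]
        ring
      calc ∑ t ∈ T, ((HISlc P t.1 t.2 : ℝ) - c) ≤ _ := h1
        _ ≤ _ := h2
        _ ≤ _ := h3
        _ = _ := h4
    have hmain : (T.card : ℝ) * c ≤ α * α * (m * n) / q := by
      rw [hcdef]
      rw [div_eq_mul_inv, div_eq_mul_inv]
      have : (T.card : ℝ) * (m * n * q⁻¹) ≤ (α * α) * (m * n * q⁻¹) := by
        exact mul_le_mul_of_nonneg_right hTcard (mul_nonneg (mul_nonneg hm0 hn0) (inv_nonneg.mpr hq0.le))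
      calc (T.card : ℝ) * (m * n * q⁻¹) ≤ (α * α) * (m * n * q⁻¹) := this
        _ = α * α * (m * n) * q⁻¹ := by ring
    rw [hsplit]
    linarith [hdev, hmain]
  -- finish
  have hsq1 : (1:ℝ) ≤ Real.sqrt q := Real.one_le_sqrt.mpr hq1
  have key : (α - 1) * α * α ≤ α * α * (m * n) / q + Real.sqrt q * (m * n) :=
    le_trans hlow hup
  have hαα : α * α ≤ Real.sqrt q * (m * n) := by
    calc α * α ≤ m * n := mul_le_mul hm hn hα0 hm0
      _ = 1 * (m * n) := (one_mul _).symm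
      _ ≤ Real.sqrt q * (m * n) := by
          apply mul_le_mul_of_nonneg_right hsq1 (by positivity)
  have hterm1 : α * α * (m * n) / q ≤ m^2 * n * α / q := by
    apply (div_le_div_iff_of_pos_right hq0).mpr
    have hfac : (0:ℝ) ≤ α * m * n * (m - α) :=
      mul_nonneg (mul_nonneg (mul_nonneg hα0 hm0) hn0) (sub_nonneg.mpr hm)
    nlinarith [hfac]
  have ht10 : (0:ℝ) ≤ m^2 * n * α / q := div_nonneg (mul_nonneg (mul_nonneg (pow_nonneg hm0 2) hn0) hα0) hq0.le
  have ht20 : (0:ℝ) ≤ Real.sqrt q * (m * n) := mul_nonneg (Real.sqrt_nonneg _) (mul_nonneg hm0 hn0)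
  have hexp : α^3 = (α - 1) * α * α + α * α := by ring
  have hfin : α^3 ≤ m^2 * n * α / q + 2 * (Real.sqrt q * (m * n)) := by
    rw [hexp]
    linarith [key, hterm1, hαα]
  calc α^3 ≤ m^2 * n * α / q + 2 * (Real.sqrt q * (m * n)) := hfin
    _ ≤ 4 * (m^2 * n * α / q + Real.sqrt q * m * n) := by nlinarith [ht10, ht20]
end
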